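/- arXiv:2504.21655 — 7 statements merged into one kernel-verified Lean document; each statement's English description precedes it below -/
import Mathlib

section
/- For every integer t ≥ 2, the following identity of formal power series holds: Σ_{n≥0} b_{t,1}(n) q^n = ((q^t;q^t)_∞/(q;q)_∞) · ( q/(1−q) − q^t/(1−q^t) ). -/
open Finset PowerSeries

/-- Number of cells with hook length `k` in the Young diagram of the partition `p`
(rows sorted in nonincreasing order; the cell in row `i`, column `j` (0-indexed) has
hook length `λ_i + λ'_j - i - j - 1`). -/
def hooks {n : ℕ} (p : n.Partition) (k : ℕ) : ℕ :=
  ∑ i ∈ Finset.range ((p.parts.sort (· ≥ ·)).length),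
    ((Finset.range ((p.parts.sort (· ≥ ·)).getD i 0)).filter
      (fun j => (p.parts.sort (· ≥ ·)).getD i 0
        + ((p.parts.sort (· ≥ ·)).filter (fun x => j < x)).length - i - j - 1 = k)).card

/-- `b t k n`: total number of hooks of length `k` in all `t`-regular partitions of `n`. -/
def b (t k n : ℕ) : ℕ :=
  ∑ p ∈ Finset.univ.filter (fun p : n.Partition => ∀ x ∈ p.parts, ¬ t ∣ x), hooks p k

/-- The infinite product `(q^a ; q^d)_∞ = ∏_{i ≥ 0} (1 - q^{a + d·i})` as a formal power
series (for `a ≥ 1`): the coefficient of `q^n` in the partial products stabilizes, since the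
factors with `i > n` have valuation `> n`, so we may define the product coefficientwise. -/
noncomputable def qpoch (a d : ℕ) : PowerSeries ℚ :=
  PowerSeries.mk fun n =>
    PowerSeries.coeff (R := ℚ) n
      (∏ i ∈ Finset.range (n + 1), (1 - (PowerSeries.X : PowerSeries ℚ) ^ (a + d * i)))

/-- The number of `t`-regular partitions of `n`. -/
def preg (t n : ℕ) : ℕ :=
  (Finset.univ.filter (fun p : n.Partition => ∀ x ∈ p.parts, ¬ t ∣ x)).card

lemma sum_hooks_one (l : List ℕ) (hs : l.Pairwise (· ≥ ·)) (hp : ∀ x ∈ l, 0 < x) :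
    (∑ i ∈ Finset.range l.length,
      ((Finset.range (l.getD i 0)).filter
        (fun j => l.getD i 0 + (l.filter (fun x => j < x)).length - i - j - 1 = 1)).card)
      = l.toFinset.card := by
  induction l with
  | nil => simp
  | cons a xs ih =>
    rw [List.pairwise_cons] at hs
    obtain ⟨ha, hs'⟩ := hs
    have hxpos : ∀ x ∈ xs, 0 < x := fun x hx => hp x (List.mem_cons_of_mem _ hx)
    have hapos : 0 < a := hp a (List.mem_cons_self)
    rw [List.length_cons, Finset.sum_range_succ']
    have tail_eq : ∀ i ∈ Finset.range xs.length,
        ((Finset.range ((a::xs).getD (i+1) 0)).filter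
          (fun j => (a::xs).getD (i+1) 0 + ((a::xs).filter (fun x => j < x)).length - (i+1) - j - 1 = 1)).card
        = ((Finset.range (xs.getD i 0)).filter
          (fun j => xs.getD i 0 + (xs.filter (fun x => j < x)).length - i - j - 1 = 1)).card := by
      intro i hi
      rw [Finset.mem_range] at hi
      rw [List.getD_cons_succ]
      congr 1
      apply Finset.filter_congr
      intro j hj
      rw [Finset.mem_range] at hj
      have hxa : xs.getD i 0 ≤ a := by
        rw [List.getD_eq_getElem _ _ hi]
        exact ha _ (List.getElem_mem hi)
      have hja : j < a := lt_of_lt_of_le hj hxa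
      rw [List.filter_cons_of_pos (by simpa using hja), List.length_cons]
      constructor <;> intro h <;> omega
    rw [Finset.sum_congr rfl tail_eq, ih hs' hxpos]
    have head_eq : ((Finset.range ((a::xs).getD 0 0)).filter
        (fun j => (a::xs).getD 0 0 + ((a::xs).filter (fun x => j < x)).length - 0 - j - 1 = 1)).card
        = if a ∈ xs then 0 else 1 := by
      rw [List.getD_cons_zero]
      split_ifs with hmem
      · rw [Finset.card_eq_zero, Finset.filter_eq_empty_iff]
        intro j hj
        rw [Finset.mem_range] at hj
        rw [List.filter_cons_of_pos (by simpa using hj), List.length_cons]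
        by_cases hja : j = a - 1
        · have hmf : a ∈ xs.filter (fun x => decide (j < x)) := by
            rw [List.mem_filter]
            exact ⟨hmem, by simp; omega⟩
          have hl : 0 < (xs.filter (fun x => decide (j < x))).length :=
            List.length_pos_iff.mpr (List.ne_nil_of_mem hmf)
          omega
        · omega
      · rw [Finset.card_eq_one]
        refine ⟨a - 1, ?_⟩
        ext j
        simp only [Finset.mem_filter, Finset.mem_range, Finset.mem_singleton]
        constructor
        · rintro ⟨hj, hcond⟩
          rw [List.filter_cons_of_pos (by simpa using hj), List.length_cons] at hcond
          omega
        · rintro rfl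
          have hfe : xs.filter (fun x => decide (a - 1 < x)) = [] := by
            rw [List.filter_eq_nil_iff]
            intro x hx
            have h1 := ha x hx
            have h2 : x ≠ a := fun h => hmem (h ▸ hx)
            simp only [decide_eq_true_eq]
            omega
          refine ⟨by omega, ?_⟩
          rw [List.filter_cons_of_pos (by simp; omega), hfe]
          simp
          omega
    rw [head_eq, List.toFinset_cons]
    by_cases hmem : a ∈ xs
    · rw [if_pos hmem, Finset.insert_eq_self.mpr (List.mem_toFinset.mpr hmem)]
      omega
    · rw [if_neg hmem, Finset.card_insert_of_notMem (fun h => hmem (List.mem_toFinset.mp h))]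

lemma hooks_one {n : ℕ} (p : n.Partition) : hooks p 1 = p.parts.toFinset.card := by
  rw [hooks, sum_hooks_one _ (p.parts.pairwise_sort _)
    (fun x hx => p.parts_pos (by rwa [Multiset.mem_sort] at hx))]
  congr 1
  ext x
  simp [List.mem_toFinset, Multiset.mem_sort, Multiset.mem_toFinset]

/-- Removing one copy of a part `y` gives a bijection between `t`-regular
partitions of `n` containing `y` and `t`-regular partitions of `n - y`. -/
lemma card_contains (t y n : ℕ) (hy : 1 ≤ y) (hyn : y ≤ n) (hty : ¬ t ∣ y) :
    (Finset.univ.filter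
      (fun p : n.Partition => (∀ x ∈ p.parts, ¬ t ∣ x) ∧ y ∈ p.parts)).card
      = preg t (n - y) := by
  classical
  rw [preg]
  refine Finset.card_bij'
    (fun p hp => (⟨p.parts.erase y,
      fun {i} hi => p.parts_pos (Multiset.mem_of_mem_erase hi),
      by
        have hmem : y ∈ p.parts := (Finset.mem_filter.mp hp).2.2
        have hce := Multiset.cons_erase hmem
        have hsum : (y ::ₘ p.parts.erase y).sum = n := by rw [hce]; exact p.parts_sum
        rw [Multiset.sum_cons] at hsum
        omega⟩ : (n - y).Partition))
    (fun q hq => (⟨y ::ₘ q.parts,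
      fun {i} hi => by
        rcases Multiset.mem_cons.mp hi with rfl | hi
        · omega
        · exact q.parts_pos hi,
      by rw [Multiset.sum_cons, q.parts_sum]; omega⟩ : n.Partition))
    ?_ ?_ ?_ ?_
  · intro p hp
    simp only [Finset.mem_filter, Finset.mem_univ, true_and] at hp ⊢
    intro x hx
    exact hp.1 x (Multiset.mem_of_mem_erase hx)
  · intro q hq
    simp only [Finset.mem_filter, Finset.mem_univ, true_and] at hq ⊢
    constructor
    · intro x hx
      rcases Multiset.mem_cons.mp hx with rfl | hx
      · exact hty
      · exact hq x hx
    · exact Multiset.mem_cons_self _ _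
  · intro p hp
    have hmem : y ∈ p.parts := (Finset.mem_filter.mp hp).2.2
    apply Nat.Partition.ext
    simp only
    exact Multiset.cons_erase hmem
  · intro q hq
    apply Nat.Partition.ext
    simp only
    exact Multiset.erase_cons_head _ _

noncomputable section

variable {α : Type*}

open scoped Classical

universe u
variable {ι : Type u}

/-- A convenience constructor for the power series whose coefficients indicate a subset. -/
def indicatorSeries (α : Type*) [Semiring α] (s : Set ℕ) : PowerSeries α :=
  PowerSeries.mk fun n => if n ∈ s then 1 else 0

theorem coeff_indicator (s : Set ℕ) [Semiring α] (n : ℕ) :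
    coeff (R := α) n (indicatorSeries _ s) = if n ∈ s then 1 else 0 :=
  coeff_mk _ _

theorem coeff_indicator_pos (s : Set ℕ) [Semiring α] (n : ℕ) (h : n ∈ s) :
    coeff (R := α) n (indicatorSeries _ s) = 1 := by rw [coeff_indicator, if_pos h]

theorem coeff_indicator_neg (s : Set ℕ) [Semiring α] (n : ℕ) (h : n ∉ s) :
    coeff (R := α) n (indicatorSeries _ s) = 0 := by rw [coeff_indicator, if_neg h]

theorem constantCoeff_indicator (s : Set ℕ) [Semiring α] :
    constantCoeff (R := α) (indicatorSeries _ s) = if 0 ∈ s then 1 else 0 :=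
  rfl

theorem two_series (i : ℕ) [Semiring α] :
    1 + (X : PowerSeries α) ^ i.succ = indicatorSeries α {0, i.succ} := by
  ext n
  simp only [coeff_indicator, coeff_one, coeff_X_pow, Set.mem_insert_iff, Set.mem_singleton_iff,
    map_add]
  cases' n with d
  · simp [(Nat.succ_ne_zero i).symm]
  · simp [Nat.succ_ne_zero d]

theorem num_series' [Field α] (i : ℕ) :
    (1 - (X : PowerSeries α) ^ (i + 1))⁻¹ = indicatorSeries α {k | i + 1 ∣ k} := by
  rw [PowerSeries.inv_eq_iff_mul_eq_one]
  · ext n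
    cases n with
    | zero => simp [mul_sub, zero_pow, constantCoeff_indicator]
    | succ n =>
      simp only [coeff_one, if_false, mul_sub, mul_one, coeff_indicator,
        LinearMap.map_sub, reduceCtorEq]
      simp_rw [coeff_mul, coeff_X_pow, coeff_indicator, @boole_mul _ _ _ _]
      rw [@sum_ite _ _ _ _ _ (fun _ => Classical.propDecidable _), sum_ite]
      simp_rw [@filter_filter _ _ _ _ _, sum_const_zero, add_zero, sum_const, nsmul_eq_mul, mul_one,
        sub_eq_iff_eq_add, zero_add]
      symm
      split_ifs with h
      · suffices #{a ∈ antidiagonal (n + 1) | i + 1 ∣ a.fst ∧ a.snd = i + 1} = 1 by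
          simp only [Set.mem_setOf_eq]; convert congr_arg ((↑) : ℕ → α) this; norm_cast
        rw [card_eq_one]
        cases' h with p hp
        refine ⟨((i + 1) * (p - 1), i + 1), ?_⟩
        ext ⟨a₁, a₂⟩
        simp only [mem_filter, Prod.mk.injEq, Finset.HasAntidiagonal.mem_antidiagonal, mem_singleton]
        constructor
        · rintro ⟨a_left, ⟨a, rfl⟩, rfl⟩
          refine ⟨?_, rfl⟩
          rw [Nat.mul_sub_left_distrib, ← hp, ← a_left, mul_one, Nat.add_sub_cancel]
        · rintro ⟨rfl, rfl⟩
          match p with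
          | 0 => rw [mul_zero] at hp; cases hp
          | p + 1 => rw [hp]; simp [mul_add]
      · suffices #{a ∈ antidiagonal (n + 1) | i + 1 ∣ a.fst ∧ a.snd = i + 1} = 0 by
          simp only [Set.mem_setOf_eq]; convert congr_arg ((↑) : ℕ → α) this; norm_cast
        rw [card_eq_zero]
        apply eq_empty_of_forall_notMem
        simp only [Prod.forall, mem_filter, not_and, Finset.HasAntidiagonal.mem_antidiagonal]
        rintro _ h₁ h₂ ⟨a, rfl⟩ rfl
        apply h
        simp [← h₂]
  · simp [zero_pow]

def mkOdd : ℕ ↪ ℕ :=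
  ⟨fun i => 2 * i + 1, fun x y h => by linarith⟩

-- The main workhorse of the partition theorem proof.
theorem partialGF_prop (α : Type*) [CommSemiring α] (n : ℕ) (s : Finset ℕ) (hs : ∀ i ∈ s, 0 < i)
    (c : ℕ → Set ℕ) (hc : ∀ i, i ∉ s → 0 ∈ c i) :
    #{p : n.Partition | (∀ j, p.parts.count j ∈ c j) ∧ ∀ j ∈ p.parts, j ∈ s} =
      coeff (R := α) n (∏ i ∈ s, indicatorSeries α ((· * i) '' c i)) := by
  simp_rw [coeff_prod, coeff_indicator, prod_boole, sum_boole]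
  apply congr_arg
  simp only [mem_univ, forall_true_left, not_and, not_forall, exists_prop,
    Set.mem_image, not_exists]
  set φ : (a : Nat.Partition n) →
    a ∈ filter (fun p ↦ (∀ (j : ℕ), Multiset.count j p.parts ∈ c j) ∧ ∀ j ∈ p.parts, j ∈ s) univ →
    ℕ →₀ ℕ := fun p _ => {
      toFun := fun i => Multiset.count i p.parts • i
      support := Finset.filter (fun i => i ≠ 0) p.parts.toFinset
      mem_support_toFun := fun a => by
        simp only [smul_eq_mul, ne_eq, mul_eq_zero, Multiset.count_eq_zero]
        rw [not_or, not_not]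
        simp only [Multiset.mem_toFinset, not_not, mem_filter] }
  refine Finset.card_bij φ ?_ ?_ ?_
  · intro a ha
    simp only [φ, not_forall, not_exists, not_and, exists_prop, mem_filter]
    rw [mem_finsuppAntidiag]
    dsimp only [ne_eq, smul_eq_mul, id_eq, eq_mpr_eq_cast, le_eq_subset, Finsupp.coe_mk]
    simp only [mem_univ, forall_true_left, not_and, not_forall, exists_prop,
      mem_filter, true_and] at ha
    refine ⟨⟨?_, fun i ↦ ?_⟩, fun i _ ↦ ⟨a.parts.count i, ha.1 i, rfl⟩⟩
    · conv_rhs => simp [← a.parts_sum]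
      rw [sum_multiset_count_of_subset _ s]
      · simp only [smul_eq_mul]
      · intro i
        simp only [Multiset.mem_toFinset, not_not, mem_filter]
        apply ha.2
    · simp only [ne_eq, Multiset.mem_toFinset, not_not, mem_filter, and_imp]
      exact fun hi _ ↦ ha.2 i hi
  · intro p₁ hp₁ p₂ hp₂ h
    apply Nat.Partition.ext
    simp only [true_and, mem_univ, mem_filter] at hp₁ hp₂
    ext i
    simp only [φ, ne_eq, Multiset.mem_toFinset, not_not, smul_eq_mul, Finsupp.mk.injEq] at h
    by_cases hi : i = 0
    · rw [hi]
      rw [Multiset.count_eq_zero_of_notMem]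
      · rw [Multiset.count_eq_zero_of_notMem]
        intro a; exact Nat.lt_irrefl 0 (hs 0 (hp₂.2 0 a))
      intro a; exact Nat.lt_irrefl 0 (hs 0 (hp₁.2 0 a))
    · rw [← mul_left_inj' hi]
      rw [funext_iff] at h
      exact h.2 i
  · simp only [φ, mem_filter, mem_finsuppAntidiag, mem_univ, exists_prop, true_and, and_assoc]
    rintro f ⟨hf, hf₃, hf₄⟩
    have hf' : f ∈ finsuppAntidiag s n := mem_finsuppAntidiag.mpr ⟨hf, hf₃⟩
    simp only [mem_finsuppAntidiag] at hf'
    refine ⟨⟨∑ i ∈ s, Multiset.replicate (f i / i) i, ?_, ?_⟩, ?_, ?_, ?_⟩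
    · intro i hi
      simp only [exists_prop, Multiset.mem_sum, mem_map, Function.Embedding.coeFn_mk] at hi
      rcases hi with ⟨t, ht, z⟩
      apply hs
      rwa [Multiset.eq_of_mem_replicate z]
    · simp_rw [Multiset.sum_sum, Multiset.sum_replicate, Nat.nsmul_eq_mul]
      rw [← hf'.1]
      refine sum_congr rfl fun i hi => Nat.div_mul_cancel ?_
      rcases hf₄ i hi with ⟨w, _, hw₂⟩
      rw [← hw₂]
      exact dvd_mul_left _ _
    · intro i
      simp_rw [Multiset.count_sum', Multiset.count_replicate, sum_ite_eq']
      split_ifs with h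
      · rcases hf₄ i h with ⟨w, hw₁, hw₂⟩
        rwa [← hw₂, Nat.mul_div_cancel _ (hs i h)]
      · exact hc _ h
    · intro i hi
      rw [Multiset.mem_sum] at hi
      rcases hi with ⟨j, hj₁, hj₂⟩
      rwa [Multiset.eq_of_mem_replicate hj₂]
    · ext i
      simp_rw [Multiset.count_sum', Multiset.count_replicate, sum_ite_eq']
      simp only [ne_eq, Multiset.mem_toFinset, not_not, smul_eq_mul, ite_mul,
        zero_mul, Finsupp.coe_mk]
      split_ifs with h
      · apply Nat.div_mul_cancel
        rcases hf₄ i h with ⟨w, _, hw₂⟩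
        apply Dvd.intro_left _ hw₂
      · apply symm
        rw [← Finsupp.notMem_support_iff]
        exact notMem_mono hf'.2 h



lemma coeff_mul_one_sub_X_pow (f : PowerSeries ℚ) (k j : ℕ) (h : k < j) :
    coeff (R := ℚ) k (f * (1 - X ^ j)) = coeff (R := ℚ) k f := by
  rw [mul_sub, mul_one, map_sub, coeff_mul_X_pow', if_neg (by omega), sub_zero]

/-- Coefficient stability for `qpoch`: any partial product with enough factors works. -/
lemma coeff_qpoch_eq (a d n m : ℕ) (ha : 0 < a) (hd : 0 < d) (hm : n < m) :
    coeff (R := ℚ) n (qpoch a d) = coeff (R := ℚ) n (∏ i ∈ range m, (1 - X ^ (a + d * i))) := by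
  rw [qpoch, coeff_mk]
  induction m, hm using Nat.le_induction with
  | base => rfl
  | succ m hm ih =>
      have hstep : coeff (R := ℚ) n (∏ i ∈ range (m + 1), (1 - X ^ (a + d * i)))
          = coeff (R := ℚ) n (∏ i ∈ range m, (1 - X ^ (a + d * i))) := by
        rw [Finset.prod_range_succ]
        exact coeff_mul_one_sub_X_pow _ _ _ (by nlinarith)
      rw [hstep]
      exact ih

/-- The coefficient of the partial product for `t`-regular partitions counts them. -/
lemma coeff_G (t n m : ℕ) (ht : 2 ≤ t) (hn : n < m) :
    coeff (R := ℚ) n (∏ i ∈ (range m).filter (fun i => ¬ t ∣ (i + 1)), (1 - X ^ (i + 1))⁻¹)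
      = preg t n := by
  have key := partialGF_prop ℚ n
    (((range m).filter (fun i => ¬ t ∣ (i + 1))).map ⟨Nat.succ, Nat.succ_injective⟩)
    (by
      rintro i hi
      rw [mem_map] at hi
      obtain ⟨j, -, rfl⟩ := hi
      exact Nat.succ_pos j)
    (fun _ => Set.univ) (fun _ _ => trivial)
  rw [Finset.prod_map] at key
  simp only [Function.Embedding.coeFn_mk] at key
  have hprod : ∏ i ∈ (range m).filter (fun i => ¬ t ∣ (i + 1)), (1 - X ^ (i + 1))⁻¹
      = ∏ i ∈ (range m).filter (fun i => ¬ t ∣ (i + 1)),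
          indicatorSeries ℚ ((· * Nat.succ i) '' Set.univ) := by
    apply Finset.prod_congr rfl
    intro i _
    have himg : ((· * Nat.succ i) '' Set.univ) = {k | i + 1 ∣ k} := by
      ext k
      simp only [Set.image_univ, Set.mem_range, Set.mem_setOf_eq, Nat.succ_eq_add_one]
      constructor
      · rintro ⟨c, rfl⟩
        exact Dvd.intro_left c rfl
      · rintro ⟨c, rfl⟩
        exact ⟨c, mul_comm _ _⟩
    rw [num_series', himg]
  rw [hprod, ← key, preg]
  norm_cast
  congr 1
  apply Finset.filter_congr
  intro p _
  simp only [Set.mem_univ, forall_const, true_and, mem_map, mem_filter, mem_range,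
    Function.Embedding.coeFn_mk]
  constructor
  · intro h j hj
    obtain ⟨i, ⟨-, hi2⟩, rfl⟩ := h j hj
    exact hi2
  · intro h j hj
    have hj0 : 0 < j := p.parts_pos hj
    have hjn : j ≤ n := by
      have := Multiset.single_le_sum (fun x _ => Nat.zero_le x) _ hj
      rwa [p.parts_sum] at this
    exact ⟨j - 1, ⟨by omega, by rw [Nat.sub_add_cancel hj0]; exact h j hj⟩,
      by omega⟩

lemma mk_preg_mul (t : ℕ) (ht : 2 ≤ t) :
    PowerSeries.mk (fun n => (preg t n : ℚ)) * qpoch 1 1 = qpoch t t := by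
  ext n
  set m := t * (n + 1) with hm
  have h2 : (0:ℕ) < t := by omega
  have hnm : n < m := lt_of_lt_of_le (Nat.lt_succ_self n) (Nat.le_mul_of_pos_left (n+1) h2)
  -- step 1 : replace both factors by partial products
  have hGA : (coeff (R := ℚ) n) (PowerSeries.mk (fun k => (preg t k : ℚ)) * qpoch 1 1)
      = coeff (R := ℚ) n ((∏ i ∈ (range m).filter (fun i => ¬ t ∣ (i+1)), (1 - X ^ (i+1))⁻¹)
          * ∏ i ∈ range m, (1 - X ^ (i+1))) := by
    rw [PowerSeries.coeff_mul, PowerSeries.coeff_mul]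
    apply Finset.sum_congr rfl
    rintro ⟨x, y⟩ hxy
    rw [Finset.HasAntidiagonal.mem_antidiagonal] at hxy
    have hx : x < m := by omega
    have hy : y < m := by omega
    rw [coeff_mk, coeff_G t x m ht hx]
    congr 1
    rw [coeff_qpoch_eq 1 1 y m one_pos one_pos hy]
    apply congrArg
    apply Finset.prod_congr rfl
    intro i _
    congr 2
    omega
  rw [hGA]
  -- step 2 : split the full product and cancel
  rw [← Finset.prod_filter_mul_prod_filter_not (range m) (fun i => t ∣ (i+1))
    (fun i => 1 - (X : PowerSeries ℚ) ^ (i+1))]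
  have hGN : (∏ i ∈ (range m).filter (fun i => ¬ t ∣ (i+1)),
        (1 - (X : PowerSeries ℚ) ^ (i+1))⁻¹)
      * (∏ i ∈ (range m).filter (fun i => ¬ t ∣ (i+1)), (1 - X ^ (i+1))) = 1 := by
    rw [← Finset.prod_mul_distrib]
    apply Finset.prod_eq_one
    intro i _
    refine PowerSeries.inv_mul_cancel _ ?_
    simp
  rw [show (∏ i ∈ (range m).filter (fun i => ¬ t ∣ (i+1)),
        (1 - (X : PowerSeries ℚ) ^ (i+1))⁻¹)
      * ((∏ i ∈ (range m).filter (fun i => t ∣ (i+1)), (1 - X ^ (i+1)))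
        * ∏ i ∈ (range m).filter (fun i => ¬ t ∣ (i+1)), (1 - X ^ (i+1)))
      = ((∏ i ∈ (range m).filter (fun i => ¬ t ∣ (i+1)), (1 - X ^ (i+1))⁻¹)
          * ∏ i ∈ (range m).filter (fun i => ¬ t ∣ (i+1)), (1 - X ^ (i+1)))
        * ∏ i ∈ (range m).filter (fun i => t ∣ (i+1)), (1 - X ^ (i+1)) from by ring,
    hGN, one_mul]
  -- step 3 : reindex the product over multiples of t
  have hset : (range m).filter (fun i => t ∣ (i+1))
      = (range (n+1)).image (fun j => t*(j+1) - 1) := by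
    ext i
    simp only [mem_filter, mem_range, mem_image]
    constructor
    · rintro ⟨him, c, hc⟩
      have hc1 : 1 ≤ c := by nlinarith
      have hcn : c ≤ n + 1 := by
        by_contra hcon
        push_neg at hcon
        have h3 : t * (n + 2) ≤ t * c := Nat.mul_le_mul_left t hcon
        have h4 : t * (n + 2) = t * (n + 1) + t := by ring
        omega
      refine ⟨c - 1, by omega, ?_⟩
      have : c - 1 + 1 = c := by omega
      rw [this]
      omega
    · rintro ⟨j, hj, rfl⟩
      have hmul : t * (j + 1) = t * j + t := by ring
      have hle : t * (j+1) ≤ t * (n+1) := Nat.mul_le_mul_left t (by omega)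
      refine ⟨by omega, j + 1, by omega⟩
  rw [hset, Finset.prod_image (fun x _ y _ hxy => by
    have e1 : t * (x+1) = t * x + t := by ring
    have e2 : t * (y+1) = t * y + t := by ring
    have e3 : t * (x+1) = t * (y+1) := by omega
    have := Nat.eq_of_mul_eq_mul_left h2 e3
    omega)]
  rw [qpoch, coeff_mk]
  apply congrArg
  apply Finset.prod_congr rfl
  intro j _
  have hmul : t * (j + 1) = t * j + t := by ring
  congr 2
  omega

lemma constantCoeff_qpoch_one : constantCoeff (R := ℚ) (qpoch 1 1) = 1 := by
  have : constantCoeff (R := ℚ) (qpoch 1 1) = coeff (R := ℚ) 0 (qpoch 1 1) := by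
    rw [PowerSeries.coeff_zero_eq_constantCoeff]
  rw [this, qpoch, coeff_mk]
  simp

lemma qpoch_ratio (t : ℕ) (ht : 2 ≤ t) :
    qpoch t t * (qpoch 1 1)⁻¹ = PowerSeries.mk (fun n => (preg t n : ℚ)) := by
  rw [← mk_preg_mul t ht, mul_assoc,
    PowerSeries.mul_inv_cancel _ (by rw [constantCoeff_qpoch_one]; norm_num), mul_one]

lemma coeff_D (t j : ℕ) (ht : 2 ≤ t) :
    coeff (R := ℚ) j ((X : PowerSeries ℚ) * (1 - X)⁻¹ - X ^ t * (1 - X ^ t)⁻¹)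
      = if 1 ≤ j ∧ ¬ t ∣ j then 1 else 0 := by
  have h1 : ((1 : PowerSeries ℚ) - X)⁻¹ = indicatorSeries ℚ {k | 1 ∣ k} := by
    have := num_series' (α := ℚ) 0
    rw [zero_add, pow_one] at this
    exact this
  have h2 : ((1 : PowerSeries ℚ) - X ^ t)⁻¹ = indicatorSeries ℚ {k | t ∣ k} := by
    have := num_series' (α := ℚ) (t - 1)
    rw [show t - 1 + 1 = t by omega] at this
    exact this
  have hXf : ∀ (f : PowerSeries ℚ), coeff (R := ℚ) j (X * f)
      = if 1 ≤ j then coeff (R := ℚ) (j-1) f else 0 := by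
    intro f
    have := PowerSeries.coeff_X_pow_mul' f 1 j
    rwa [pow_one] at this
  rw [map_sub, h1, h2, hXf, PowerSeries.coeff_X_pow_mul', coeff_indicator, coeff_indicator]
  simp only [Set.mem_setOf_eq]
  by_cases hj : 1 ≤ j
  · by_cases hd : t ∣ j
    · have hle : t ≤ j := Nat.le_of_dvd (by omega) hd
      have hd2 : t ∣ j - t := Nat.dvd_sub hd dvd_rfl
      simp [hj, hd, hle, hd2, Nat.one_dvd]
    · have hnd : ¬ (t ≤ j) ∨ ¬ t ∣ j - t := by
        by_cases hlt : t ≤ j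
        · right
          intro hcon
          apply hd
          have := Nat.dvd_add hcon (dvd_refl t)
          rwa [Nat.sub_add_cancel hlt] at this
        · left; exact hlt
      rcases hnd with hnd | hnd <;> simp [hj, hd, hnd, Nat.one_dvd]
  · have hj0 : j = 0 := by omega
    subst hj0
    simp [show ¬ t ≤ 0 by omega]

lemma b_eq (t n : ℕ) (ht : 2 ≤ t) :
    b t 1 n = ∑ y ∈ range (n+1), (if 1 ≤ y ∧ ¬ t ∣ y then preg t (n - y) else 0) := by
  classical
  rw [b]
  have hre : ∀ p ∈ Finset.univ.filter (fun p : n.Partition => ∀ x ∈ p.parts, ¬ t ∣ x),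
      hooks p 1 = ∑ y ∈ range (n+1), (if (1 ≤ y ∧ ¬ t ∣ y) ∧ y ∈ p.parts then 1 else 0) := by
    intro p hp
    rw [Finset.mem_filter] at hp
    rw [hooks_one]
    have hfin : p.parts.toFinset
        = (range (n+1)).filter (fun y => (1 ≤ y ∧ ¬ t ∣ y) ∧ y ∈ p.parts) := by
      ext y
      simp only [Multiset.mem_toFinset, mem_filter, mem_range]
      constructor
      · intro hy
        have h0 : 0 < y := p.parts_pos hy
        have hyn : y ≤ n := by
          have := Multiset.single_le_sum (fun x _ => Nat.zero_le x) _ hy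
          rwa [p.parts_sum] at this
        exact ⟨by omega, ⟨h0, hp.2 y hy⟩, hy⟩
      · rintro ⟨-, -, hy⟩
        exact hy
    rw [hfin, Finset.card_filter]
  rw [Finset.sum_congr rfl hre, Finset.sum_comm]
  apply Finset.sum_congr rfl
  intro y hy
  rw [mem_range] at hy
  by_cases hcond : 1 ≤ y ∧ ¬ t ∣ y
  · rw [if_pos hcond]
    have hstep : ∀ p ∈ Finset.univ.filter (fun p : n.Partition => ∀ x ∈ p.parts, ¬ t ∣ x),
        (if (1 ≤ y ∧ ¬ t ∣ y) ∧ y ∈ p.parts then (1:ℕ) else 0)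
          = if y ∈ p.parts then 1 else 0 := by
      intro p _
      simp [hcond]
    rw [Finset.sum_congr rfl hstep, ← Finset.card_filter, Finset.filter_filter]
    rw [← card_contains t y n hcond.1 (by omega) hcond.2]
  · rw [if_neg hcond]
    apply Finset.sum_eq_zero
    intro p _
    rw [if_neg (by tauto)]

theorem genfun_bt1 (t : ℕ) (ht : 2 ≤ t) :
    PowerSeries.mk (fun n => (b t 1 n : ℚ)) =
      qpoch t t * (qpoch 1 1)⁻¹ * (X * (1 - X)⁻¹ - X ^ t * (1 - X ^ t)⁻¹) := by
  rw [qpoch_ratio t ht]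
  ext n
  rw [coeff_mk, PowerSeries.coeff_mul]
  have hterm : ∀ p ∈ antidiagonal n,
      coeff (R := ℚ) p.1 (PowerSeries.mk (fun k => (preg t k : ℚ)))
        * coeff (R := ℚ) p.2 ((X : PowerSeries ℚ) * (1 - X)⁻¹ - X ^ t * (1 - X ^ t)⁻¹)
      = (fun x y => if 1 ≤ y ∧ ¬ t ∣ y then (preg t x : ℚ) else 0) p.1 p.2 := by
    rintro ⟨x, y⟩ -
    rw [coeff_mk, coeff_D t y ht]
    simp only [mul_ite, mul_one, mul_zero]
  rw [Finset.sum_congr rfl hterm,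
    Finset.Nat.sum_antidiagonal_eq_sum_range_succ
      (fun x y => if 1 ≤ y ∧ ¬ t ∣ y then (preg t x : ℚ) else 0)]
  rw [b_eq t n ht]
  push_cast
  rw [← Finset.sum_range_reflect]
  apply Finset.sum_congr rfl
  intro j hj
  rw [mem_range] at hj
  rw [show n + 1 - 1 - j = n - j by omega]
  by_cases hc : 1 ≤ n - j ∧ ¬ t ∣ (n - j)
  · rw [if_pos hc, if_pos hc, show n - (n - j) = j by omega]
  · rw [if_neg hc, if_neg hc]
end
end

section
/- Let t ≥ 2 be an integer. For every integer n ≥ 192t^5 − 192t^4 − 24t^3 + 24t^2 + 6t + 2, the cardinality of O_t(n) is at most the cardinality of R_t(n); equivalently, there is an injection from O_t(n) into R_t(n). -/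
open Finset
open scoped Classical

lemma msup_mem (s : Multiset ℕ) (hs : s ≠ 0) : s.sup ∈ s := by
  induction s using Multiset.induction with
  | empty => simp at hs
  | cons a s ih =>
    rcases eq_or_ne s 0 with rfl | h
    · simp
    · rw [Multiset.sup_cons]
      rcases le_total a s.sup with hle | hle
      · rw [sup_eq_right.2 hle]; exact Multiset.mem_cons_of_mem (ih h)
      · rw [sup_eq_left.2 hle]; exact Multiset.mem_cons_self _ _

lemma msum_eq_sum_count (s : Multiset ℕ) :
    s.sum = ∑ a ∈ s.toFinset, s.count a * a := by
  conv_lhs => rw [← Multiset.toFinset_sum_count_nsmul_eq s]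
  rw [Multiset.sum_sum]
  refine Finset.sum_congr rfl fun a _ => ?_
  simp [Multiset.nsmul_singleton, Multiset.sum_replicate, smul_eq_mul, mul_comm]

lemma msub2 (X a b : Multiset ℕ) : (X + a + b) - a - b = X := by
  rw [add_right_comm, add_tsub_cancel_right, add_tsub_cancel_right]

lemma msub3 (X a b c : Multiset ℕ) : (X + a + b + c) - a - b - c = X := by
  have e1 : X + a + b + c = X + b + c + a := by
    simp only [add_comm, add_left_comm, add_assoc]
  rw [e1, add_tsub_cancel_right]
  have e2 : X + b + c = X + c + b := by
    simp only [add_comm, add_left_comm, add_assoc]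
  rw [e2, add_tsub_cancel_right, add_tsub_cancel_right]

/-- residue representative in `[1, 2t]` of `m` mod `2t` -/
def uB (t m : ℕ) : ℕ := if m % (2*t) = 0 then 2*t else m % (2*t)

def wB (t d m : ℕ) : ℕ := (m - (d + uB t m) * (2*t+1)) / (2*t)

lemma uB_pos (t m : ℕ) (ht : 1 ≤ t) : 1 ≤ uB t m := by
  unfold uB; split
  · omega
  · omega

lemma uB_le (t m : ℕ) (ht : 1 ≤ t) : uB t m ≤ 2*t := by
  unfold uB; split
  · omega
  · exact le_of_lt (Nat.mod_lt _ (by omega))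

lemma uB_mod (t m : ℕ) : uB t m % (2*t) = m % (2*t) := by
  unfold uB; split
  · rw [Nat.mod_self]; omega
  · exact Nat.mod_mod_of_dvd m dvd_rfl

lemma key_arith (t d m : ℕ) (ht : 2 ≤ t) (hd : d % (2*t) = 0)
    (hm : (d + 2*t)*(2*t+1) + 2*t ≤ m) :
    1 ≤ wB t d m ∧ (d + uB t m) * (2*t+1) + wB t d m * (2*t) = m := by
  set u := d + uB t m with hu
  have hule : u ≤ d + 2*t := by
    have := uB_le t m (by omega); omega
  have humod : (u * (2*t+1)) % (2*t) = m % (2*t) := by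
    have h1 : u * (2*t+1) = u + (2*t) * u := by ring
    rw [h1, Nat.add_mul_mod_self_left, hu, Nat.add_mod, hd, uB_mod]
    simp [Nat.mod_mod_of_dvd]
  have hle : u * (2*t+1) + 2*t ≤ m := by
    calc u * (2*t+1) + 2*t ≤ (d + 2*t)*(2*t+1) + 2*t := by
          have : u * (2*t+1) ≤ (d+2*t)*(2*t+1) := Nat.mul_le_mul_right _ hule
          omega
      _ ≤ m := hm
  have hdvd : 2*t ∣ (m - u * (2*t+1)) :=
    Nat.dvd_of_mod_eq_zero (Nat.sub_mod_eq_zero_of_mod_eq humod.symm)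
  have hwb : wB t d m * (2*t) = m - u * (2*t+1) := Nat.div_mul_cancel hdvd
  constructor
  · have h2t : 0 < 2*t := by omega
    rw [wB, Nat.le_div_iff_mul_le h2t, ← hu]
    omega
  · rw [hwb]; omega

noncomputable def VC (t : ℕ) (P : Multiset ℕ) : Finset ℕ :=
  (Finset.Icc 2 (4*t^2+4*t-1)).filter (fun v => 8*t^3+16*t^2 ≤ P.count v * v)

noncomputable def vC (t : ℕ) (P : Multiset ℕ) : ℕ :=
  if h : (VC t P).Nonempty then (VC t P).min' h else 2

noncomputable def phim (t : ℕ) (P : Multiset ℕ) : Multiset ℕ :=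
  if (2*t+1) ∈ P then P
  else if 2*t+1 ≤ P.count 1 then
    (P - Multiset.replicate (2*t+1) 1) + {2*t+1}
  else if 4*t^2+4*t ≤ P.sup then
    P.erase P.sup + Multiset.replicate (uB t P.sup) (2*t+1)
      + Multiset.replicate (wB t 0 P.sup) (2*t)
  else
    (P - Multiset.replicate (P.count (vC t P)) (vC t P))
      + Multiset.replicate (2*t + uB t (P.count (vC t P) * vC t P - 2*t*(vC t P - 2))) (2*t+1)
      + Multiset.replicate (wB t (2*t) (P.count (vC t P) * vC t P - 2*t*(vC t P - 2))) (2*t)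
      + Multiset.replicate (2*t*(vC t P - 2)) 1

noncomputable def psim (t : ℕ) (Q : Multiset ℕ) : Multiset ℕ :=
  if Q.count (2*t) = 0 then
    if Odd (Q.count 1) then Q
    else Q.erase (2*t+1) + Multiset.replicate (2*t+1) 1
  else if Q.count (2*t+1) ≤ 2*t then
    (Q - Multiset.replicate (Q.count (2*t+1)) (2*t+1)
       - Multiset.replicate (Q.count (2*t)) (2*t))
      + {Q.count (2*t+1) * (2*t+1) + Q.count (2*t) * (2*t)}
  else
    (Q - Multiset.replicate (Q.count (2*t+1)) (2*t+1)
       - Multiset.replicate (Q.count (2*t)) (2*t)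
       - Multiset.replicate (2*t*(Q.count 1 / (2*t))) 1)
      + Multiset.replicate
          ((Q.count (2*t+1) * (2*t+1) + Q.count (2*t) * (2*t) + 2*t*(Q.count 1 / (2*t)))
            / (Q.count 1 / (2*t) + 2))
          (Q.count 1 / (2*t) + 2)

lemma poly_ineq (t : ℕ) (ht : 2 ≤ t) :
    2*t + (4*t^2+4*t-2)*(8*t^3+16*t^2-1)
      < 192*t^5 - 192*t^4 - 24*t^3 + 24*t^2 + 6*t + 2 := by
  have h1 : (2:ℕ) ≤ 4*t^2+4*t := by nlinarith
  have h2 : (1:ℕ) ≤ 8*t^3+16*t^2 := by nlinarith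
  have ha : t^3 ≤ t^4 := Nat.pow_le_pow_right (by omega) (by omega)
  have hb : 2*t^4 ≤ t^5 := by
    calc 2*t^4 ≤ t*t^4 := Nat.mul_le_mul_right _ ht
      _ = t^5 := by ring
  have h3 : 192*t^4 ≤ 192*t^5 := by omega
  have h4 : 24*t^3 ≤ 192*t^5 - 192*t^4 := by omega
  zify [h1, h2, h3, h4]
  have hx : (2:ℤ) ≤ (t:ℤ) := by exact_mod_cast ht
  nlinarith [pow_nonneg (by linarith : (0:ℤ) ≤ (t:ℤ) - 2) 5,
    pow_nonneg (by linarith : (0:ℤ) ≤ (t:ℤ) - 2) 4,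
    pow_nonneg (by linarith : (0:ℤ) ≤ (t:ℤ) - 2) 3,
    pow_nonneg (by linarith : (0:ℤ) ≤ (t:ℤ) - 2) 2,
    sub_nonneg.2 hx]

lemma phim_spec (t n : ℕ) (ht : 2 ≤ t)
    (hn : 192*t^5 - 192*t^4 - 24*t^3 + 24*t^2 + 6*t + 2 ≤ n)
    (P : Multiset ℕ) (hpos : ∀ x ∈ P, 0 < x) (hsum : P.sum = n)
    (hreg : ∀ x ∈ P, ¬ t ∣ x) (hodd : Odd (P.count 1)) :
    (∀ x ∈ phim t P, 0 < x) ∧ (phim t P).sum = n ∧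
    (∀ x ∈ phim t P, t ∣ x → x = 2*t) ∧ (2*t+1) ∈ phim t P ∧
    psim t (phim t P) = P := by
  have ht1 : (1:ℕ) ≤ t := by omega
  have hc2t : P.count (2*t) = 0 := by
    rw [Multiset.count_eq_zero]
    intro hm; exact hreg _ hm (dvd_mul_left t 2)
  have hndvd : ¬ t ∣ (2*t+1) := by
    intro h
    have h2 : t ∣ 2*t := dvd_mul_left t 2
    have h3 := Nat.dvd_sub h h2
    simp only [Nat.add_sub_cancel_left] at h3
    have := Nat.le_of_dvd (by omega) h3
    omega
  have ha1 : 1 ≤ P.count 1 := by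
    rcases hodd with ⟨k, hk⟩; omega
  have h1mem : (1:ℕ) ∈ P := Multiset.count_pos.1 (by omega)
  have hPne : P ≠ 0 := by
    intro h; rw [h] at h1mem; simp at h1mem
  by_cases h1 : (2*t+1) ∈ P
  · -- Case 1: identity
    have hφ : phim t P = P := by simp only [phim, if_pos h1]
    rw [hφ]
    refine ⟨hpos, hsum, ?_, h1, ?_⟩
    · intro x hx hdvd; exact absurd hdvd (hreg x hx)
    · simp only [psim]
      rw [if_pos hc2t, if_pos hodd]
  · by_cases h2 : 2*t+1 ≤ P.count 1
    · -- Case 2: many ones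
      have hrep : Multiset.replicate (2*t+1) 1 ≤ P :=
        Multiset.le_count_iff_replicate_le.1 h2
      have hPdec : (P - Multiset.replicate (2*t+1) 1) + Multiset.replicate (2*t+1) 1 = P :=
        tsub_add_cancel_of_le hrep
      have hφ : phim t P = (P - Multiset.replicate (2*t+1) 1) + {2*t+1} := by
        simp only [phim, if_neg h1, if_pos h2]
      rw [hφ]
      have hmemsub : ∀ x ∈ P - Multiset.replicate (2*t+1) 1, x ∈ P :=
        fun x hx => Multiset.mem_of_le (tsub_le_self) hx
      have hsumdec : (P - Multiset.replicate (2*t+1) 1).sum + (2*t+1) = n := by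
        have hc := congrArg Multiset.sum hPdec
        rw [Multiset.sum_add, Multiset.sum_replicate, smul_eq_mul, mul_one] at hc
        omega
      have hc1Q : Multiset.count 1 ((P - Multiset.replicate (2*t+1) 1) + {2*t+1})
          = P.count 1 - (2*t+1) := by
        simp only [Multiset.count_add, Multiset.count_sub, Multiset.count_replicate,
          Multiset.count_singleton]
        split_ifs <;> omega
      have hQ2t : Multiset.count (2*t) ((P - Multiset.replicate (2*t+1) 1) + {2*t+1}) = 0 := by
        simp only [Multiset.count_add, Multiset.count_sub, Multiset.count_replicate,
          Multiset.count_singleton]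
        split_ifs <;> omega
      refine ⟨?_, ?_, ?_, ?_, ?_⟩
      · intro x hx
        rcases Multiset.mem_add.1 hx with hx | hx
        · exact hpos x (hmemsub x hx)
        · rw [Multiset.mem_singleton] at hx; omega
      · rw [Multiset.sum_add, Multiset.sum_singleton]; omega
      · intro x hx hdvd
        rcases Multiset.mem_add.1 hx with hx | hx
        · exact absurd hdvd (hreg x (hmemsub x hx))
        · rw [Multiset.mem_singleton] at hx
          exact absurd (hx ▸ hdvd) hndvd
      · exact Multiset.mem_add.2 (Or.inr (Multiset.mem_singleton_self _))
      · have he : (P - Multiset.replicate (2*t+1) 1 + {2*t+1}).erase (2*t+1)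
            = P - Multiset.replicate (2*t+1) 1 := by
          rw [add_comm (P - Multiset.replicate (2*t+1) 1) ({2*t+1} : Multiset ℕ),
            Multiset.singleton_add, Multiset.erase_cons_head]
        simp only [psim]
        rw [if_pos hQ2t, if_neg ?_]
        · rw [he, hPdec]
        · rw [hc1Q, Nat.odd_iff]
          rw [Nat.odd_iff] at hodd
          omega
    · by_cases h3 : 4*t^2+4*t ≤ P.sup
      · -- Case 3: big part
        have hc2t1 : P.count (2*t+1) = 0 := Multiset.count_eq_zero.2 h1
        set L := P.sup with hLdef
        have hLmem : L ∈ P := msup_mem P hPne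
        have hL : 2*t+1 < L := by nlinarith
        obtain ⟨hw1, hkey⟩ := key_arith t 0 L ht (by simp) (by
          have he : (0+2*t)*(2*t+1)+2*t = 4*t^2+4*t := by ring
          omega)
        rw [zero_add] at hkey
        have hu1 : 1 ≤ (uB t L) := uB_pos t L ht1
        have hule : (uB t L) ≤ 2*t := uB_le t L ht1
        have hφ : phim t P = P.erase L + Multiset.replicate (uB t L) (2*t+1)
            + Multiset.replicate (wB t 0 L) (2*t) := by
          simp only [phim, if_neg h1, if_neg h2, ← hLdef, if_pos h3]
        rw [hφ]
        have hLsum : L + (P.erase L).sum = n := by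
          rw [← Multiset.sum_cons, Multiset.cons_erase hLmem, hsum]
        have hmemer : ∀ x ∈ P.erase L, x ∈ P := fun x hx => Multiset.mem_of_mem_erase hx
        have hQ2t : Multiset.count (2*t) (P.erase L + Multiset.replicate (uB t L) (2*t+1)
            + Multiset.replicate (wB t 0 L) (2*t)) = (wB t 0 L) := by
          simp only [Multiset.count_add, Multiset.count_replicate,
            Multiset.count_erase_of_ne (show (2*t : ℕ) ≠ L by omega)]
          split_ifs <;> omega
        have hQ2t1 : Multiset.count (2*t+1) (P.erase L + Multiset.replicate (uB t L) (2*t+1)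
            + Multiset.replicate (wB t 0 L) (2*t)) = (uB t L) := by
          simp only [Multiset.count_add, Multiset.count_replicate,
            Multiset.count_erase_of_ne (show (2*t+1 : ℕ) ≠ L by omega)]
          split_ifs <;> omega
        refine ⟨?_, ?_, ?_, ?_, ?_⟩
        · intro x hx
          rcases Multiset.mem_add.1 hx with hx | hx
          · rcases Multiset.mem_add.1 hx with hx | hx
            · exact hpos x (hmemer x hx)
            · have := Multiset.eq_of_mem_replicate hx; omega
          · have := Multiset.eq_of_mem_replicate hx; omega
        · rw [Multiset.sum_add, Multiset.sum_add, Multiset.sum_replicate,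
            Multiset.sum_replicate, smul_eq_mul, smul_eq_mul]
          omega
        · intro x hx hdvd
          rcases Multiset.mem_add.1 hx with hx | hx
          · rcases Multiset.mem_add.1 hx with hx | hx
            · exact absurd hdvd (hreg x (hmemer x hx))
            · have hx' := Multiset.eq_of_mem_replicate hx
              exact absurd (hx' ▸ hdvd) hndvd
          · exact Multiset.eq_of_mem_replicate hx
        · exact Multiset.mem_add.2 (Or.inl (Multiset.mem_add.2 (Or.inr
            (Multiset.mem_replicate.2 ⟨by omega, rfl⟩))))
        · simp only [psim]
          rw [hQ2t, hQ2t1, if_neg (by omega), if_pos hule, hkey, msub2,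
            add_comm (P.erase L) ({L} : Multiset ℕ), Multiset.singleton_add,
            Multiset.cons_erase hLmem]
      · -- Case 4: pigeonhole
        have hc2t1 : P.count (2*t+1) = 0 := Multiset.count_eq_zero.2 h1
        have ht3 : 1 ≤ t^3 := Nat.one_le_pow _ _ (by omega)
        have hsup : ∀ x ∈ P, x ≤ 4*t^2+4*t-1 := by
          intro x hx
          have h4 := Multiset.le_sup hx
          omega
        have hVne : (VC t P).Nonempty := by
          by_contra hVe
          have hall : ∀ v ∈ Finset.Icc 2 (4*t^2+4*t-1), P.count v * v ≤ 8*t^3+16*t^2-1 := by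
            intro v hv
            by_contra hcon
            exact hVe ⟨v, Finset.mem_filter.2 ⟨hv, by omega⟩⟩
          have hsub : P.toFinset ⊆ insert 1 (Finset.Icc 2 (4*t^2+4*t-1)) := by
            intro x hx
            rw [Multiset.mem_toFinset] at hx
            have hx0 := hpos x hx
            have hx1 := hsup x hx
            rcases eq_or_ne x 1 with rfl | hne
            · exact Finset.mem_insert_self _ _
            · exact Finset.mem_insert_of_mem (Finset.mem_Icc.2 ⟨by omega, hx1⟩)
          have hsum2 : n = ∑ x ∈ P.toFinset, P.count x * x := by
            rw [← hsum, msum_eq_sum_count]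
          have hle2 : ∑ x ∈ P.toFinset, P.count x * x
              ≤ ∑ x ∈ insert 1 (Finset.Icc 2 (4*t^2+4*t-1)), P.count x * x :=
            Finset.sum_le_sum_of_subset hsub
          have h1n : (1:ℕ) ∉ Finset.Icc 2 (4*t^2+4*t-1) := by
            simp
          rw [Finset.sum_insert h1n] at hle2
          have hIcc : ∑ x ∈ Finset.Icc 2 (4*t^2+4*t-1), P.count x * x
              ≤ (4*t^2+4*t-2) * (8*t^3+16*t^2-1) := by
            calc ∑ x ∈ Finset.Icc 2 (4*t^2+4*t-1), P.count x * x
                ≤ ∑ _x ∈ Finset.Icc 2 (4*t^2+4*t-1), (8*t^3+16*t^2-1) :=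
                  Finset.sum_le_sum hall
              _ = (Finset.Icc 2 (4*t^2+4*t-1)).card * (8*t^3+16*t^2-1) := by
                  rw [Finset.sum_const, smul_eq_mul]
              _ = (4*t^2+4*t-2) * (8*t^3+16*t^2-1) := by
                  rw [Nat.card_Icc]
                  congr 1
          have hpoly := poly_ineq t ht
          have hone : P.count 1 * 1 ≤ 2*t := by omega
          omega
        have hvmem : vC t P ∈ VC t P := by
          simp only [vC]
          rw [dif_pos hVne]
          exact Finset.min'_mem _ _
        rw [VC, Finset.mem_filter, Finset.mem_Icc] at hvmem
        obtain ⟨⟨hv2, hvle⟩, hvbig⟩ := hvmem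
        have hk1 : 1 ≤ P.count (vC t P) := by
          rcases Nat.eq_zero_or_pos (P.count (vC t P)) with h0 | hp
          · rw [h0, zero_mul] at hvbig; omega
          · exact hp
        have hvP : (vC t P) ∈ P := Multiset.count_pos.1 (by omega)
        have hvne2t : (vC t P) ≠ 2*t := by
          intro hEq; rw [hEq] at hk1; omega
        have hvne2t1 : (vC t P) ≠ 2*t+1 := fun hEq => h1 (hEq ▸ hvP)
        have ha2t : P.count 1 < 2*t := by
          rw [Nat.odd_iff] at hodd; omega
        have hrS : 2*t*((vC t P) - 2) + (8*t^2+6*t) ≤ P.count (vC t P) * (vC t P) := by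
          have h2a : (vC t P) - 2 ≤ 4*t^2+4*t-3 := by omega
          have h2b : 2*t*((vC t P)-2) ≤ 2*t*(4*t^2+4*t-3) := Nat.mul_le_mul_left _ h2a
          have h2c : 2*t*(4*t^2+4*t-3) + (8*t^2+6*t) = 8*t^3+16*t^2 := by
            have h3' : (3:ℕ) ≤ 4*t^2+4*t := by nlinarith
            zify [h3']; ring
          omega
        obtain ⟨hw1, hkey⟩ := key_arith t (2*t) (P.count (vC t P) * vC t P - 2*t*(vC t P - 2)) ht (Nat.mod_self _) (by
          have he : (2*t+2*t)*(2*t+1)+2*t = 8*t^2+6*t := by ring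
          omega)
        have hu1 : 1 ≤ uB t (P.count (vC t P) * vC t P - 2*t*(vC t P - 2)) := uB_pos t _ ht1
        have hSr : (P.count (vC t P) * vC t P - 2*t*(vC t P - 2)) + 2*t*((vC t P) - 2) = P.count (vC t P) * (vC t P) := by omega
        have hrep : Multiset.replicate (P.count (vC t P)) (vC t P) ≤ P :=
          Multiset.le_count_iff_replicate_le.1 le_rfl
        have hPdec : (P - Multiset.replicate (P.count (vC t P)) (vC t P))
            + Multiset.replicate (P.count (vC t P)) (vC t P) = P := tsub_add_cancel_of_le hrep
        have hφ : phim t P = (P - Multiset.replicate (P.count (vC t P)) (vC t P))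
            + Multiset.replicate (2*t + uB t (P.count (vC t P) * vC t P - 2*t*(vC t P - 2))) (2*t+1)
            + Multiset.replicate (wB t (2*t) (P.count (vC t P) * vC t P - 2*t*(vC t P - 2))) (2*t)
            + Multiset.replicate (2*t*(vC t P - 2)) 1 := by
          simp only [phim, if_neg h1, if_neg h2, if_neg h3]
        rw [hφ]
        have hmemsub : ∀ x ∈ P - Multiset.replicate (P.count (vC t P)) (vC t P), x ∈ P :=
          fun x hx => Multiset.mem_of_le tsub_le_self hx
        have hQ2t : Multiset.count (2*t) ((P - Multiset.replicate (P.count (vC t P)) (vC t P))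
            + Multiset.replicate (2*t + uB t (P.count (vC t P) * vC t P - 2*t*(vC t P - 2))) (2*t+1)
            + Multiset.replicate (wB t (2*t) (P.count (vC t P) * vC t P - 2*t*(vC t P - 2))) (2*t)
            + Multiset.replicate (2*t*(vC t P - 2)) 1) = (wB t (2*t) (P.count (vC t P) * vC t P - 2*t*(vC t P - 2))) := by
          simp only [Multiset.count_add, Multiset.count_sub, Multiset.count_replicate]
          split_ifs <;> omega
        have hQ2t1 : Multiset.count (2*t+1) ((P - Multiset.replicate (P.count (vC t P)) (vC t P))
            + Multiset.replicate (2*t + uB t (P.count (vC t P) * vC t P - 2*t*(vC t P - 2))) (2*t+1)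
            + Multiset.replicate (wB t (2*t) (P.count (vC t P) * vC t P - 2*t*(vC t P - 2))) (2*t)
            + Multiset.replicate (2*t*(vC t P - 2)) 1) = (2*t + uB t (P.count (vC t P) * vC t P - 2*t*(vC t P - 2))) := by
          simp only [Multiset.count_add, Multiset.count_sub, Multiset.count_replicate]
          split_ifs <;> omega
        have hQ1 : Multiset.count 1 ((P - Multiset.replicate (P.count (vC t P)) (vC t P))
            + Multiset.replicate (2*t + uB t (P.count (vC t P) * vC t P - 2*t*(vC t P - 2))) (2*t+1)
            + Multiset.replicate (wB t (2*t) (P.count (vC t P) * vC t P - 2*t*(vC t P - 2))) (2*t)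
            + Multiset.replicate (2*t*(vC t P - 2)) 1) = P.count 1 + 2*t*((vC t P) - 2) := by
          simp only [Multiset.count_add, Multiset.count_sub, Multiset.count_replicate]
          split_ifs <;> omega
        refine ⟨?_, ?_, ?_, ?_, ?_⟩
        · intro x hx
          rcases Multiset.mem_add.1 hx with hx | hx
          · rcases Multiset.mem_add.1 hx with hx | hx
            · rcases Multiset.mem_add.1 hx with hx | hx
              · exact hpos x (hmemsub x hx)
              · have := Multiset.eq_of_mem_replicate hx; omega
            · have := Multiset.eq_of_mem_replicate hx; omega
          · have := Multiset.eq_of_mem_replicate hx; omega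
        · rw [Multiset.sum_add, Multiset.sum_add, Multiset.sum_add,
            Multiset.sum_replicate, Multiset.sum_replicate, Multiset.sum_replicate,
            smul_eq_mul, smul_eq_mul, smul_eq_mul]
          have hP'sum : (P - Multiset.replicate (P.count (vC t P)) (vC t P)).sum
              + P.count (vC t P) * (vC t P) = n := by
            have hc := congrArg Multiset.sum hPdec
            rw [Multiset.sum_add, Multiset.sum_replicate, smul_eq_mul] at hc
            omega
          omega
        · intro x hx hdvd
          rcases Multiset.mem_add.1 hx with hx | hx
          · rcases Multiset.mem_add.1 hx with hx | hx
            · rcases Multiset.mem_add.1 hx with hx | hx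
              · exact absurd hdvd (hreg x (hmemsub x hx))
              · have hx' := Multiset.eq_of_mem_replicate hx
                exact absurd (hx' ▸ hdvd) hndvd
            · exact Multiset.eq_of_mem_replicate hx
          · have hx' := Multiset.eq_of_mem_replicate hx
            rw [hx'] at hdvd
            have := Nat.le_of_dvd (by omega) hdvd
            omega
        · exact Multiset.mem_add.2 (Or.inl (Multiset.mem_add.2 (Or.inl
            (Multiset.mem_add.2 (Or.inr (Multiset.mem_replicate.2 ⟨by omega, rfl⟩))))))
        · have hdiv : (P.count 1 + 2*t*((vC t P) - 2)) / (2*t) = (vC t P) - 2 := by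
            rw [Nat.add_mul_div_left _ _ (show 0 < 2*t by omega),
              Nat.div_eq_of_lt ha2t, zero_add]
          have hv22 : (vC t P) - 2 + 2 = (vC t P) := by omega
          simp only [psim]
          rw [hQ2t, hQ2t1, hQ1, if_neg (by omega), if_neg (by omega), hdiv, hv22,
            hkey, hSr, Nat.mul_div_cancel _ (show 0 < (vC t P) by omega), msub3, hPdec]

/-- `O_t(n)`: the `t`-regular partitions of `n` in which the part 1 appears an odd
number of times. -/
noncomputable def Ot (t n : ℕ) : Finset (Nat.Partition n) :=
  Finset.univ.filter fun p => (∀ x ∈ p.parts, ¬ t ∣ x) ∧ Odd (p.parts.count 1)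

/-- `R_t(n)`: the partitions of `n` in which the only multiple of `t` allowed as a part
is `2t`, and the part `2t + 1` appears at least once. -/
noncomputable def Rt (t n : ℕ) : Finset (Nat.Partition n) :=
  Finset.univ.filter fun p => (∀ x ∈ p.parts, t ∣ x → x = 2 * t) ∧ (2 * t + 1) ∈ p.parts

theorem card_Ot_le_card_Rt (t n : ℕ) (ht : 2 ≤ t)
    (hn : 192 * t ^ 5 - 192 * t ^ 4 - 24 * t ^ 3 + 24 * t ^ 2 + 6 * t + 2 ≤ n) :
    (Ot t n).card ≤ (Rt t n).card := by
  classical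
  have hOtmem : ∀ p : Nat.Partition n, p ∈ Ot t n →
      (∀ x ∈ p.parts, ¬ t ∣ x) ∧ Odd (p.parts.count 1) := by
    intro p hp
    simpa [Ot] using hp
  have spec : ∀ p : Nat.Partition n, p ∈ Ot t n →
      (∀ x ∈ phim t p.parts, 0 < x) ∧ (phim t p.parts).sum = n ∧
      (∀ x ∈ phim t p.parts, t ∣ x → x = 2*t) ∧ (2*t+1) ∈ phim t p.parts ∧
      psim t (phim t p.parts) = p.parts := fun p hp =>
    phim_spec t n ht hn p.parts (fun x hx => p.parts_pos hx) p.parts_sum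
      (hOtmem p hp).1 (hOtmem p hp).2
  apply Finset.card_le_card_of_injOn
    (fun p => if h : p ∈ Ot t n then
      ⟨phim t p.parts, fun {i} hi => (spec p h).1 i hi, (spec p h).2.1⟩ else p)
  · intro p hp
    simp only [dif_pos (Finset.mem_coe.1 hp)]
    rw [Finset.mem_coe, Rt, Finset.mem_filter]
    exact ⟨Finset.mem_univ _, (spec p hp).2.2.1, (spec p hp).2.2.2.1⟩
  · intro p hp q hq heq
    rw [Finset.mem_coe] at hp hq
    simp only [dif_pos hp, dif_pos hq] at heq
    have hparts : phim t p.parts = phim t q.parts := congrArg Nat.Partition.parts heq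
    have h1 := (spec p hp).2.2.2.2
    have h2 := (spec q hq).2.2.2.2
    apply Nat.Partition.ext
    rw [← h1, ← h2, hparts]
end

section
/- Let t ≥ 2 be an integer and n ≥ 0. The cardinality of O_t^4(n) is at most the cardinality of R_t^4(n); equivalently, there is an injection from O_t^4(n) into R_t^4(n). -/
open Finset
open scoped Classical

/-- `O_t^4(n)`: partitions in `O_t(n)` with no part `> 1` congruent to `1 (mod 2t)`,
largest part `< 8t² + 1`, every part `l ≥ 2` appearing fewer than `6t + 1` times, and
the part 1 appearing at least `12t + 3` times. -/
noncomputable def Ot4 (t n : ℕ) : Finset (Nat.Partition n) :=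
  (Ot t n).filter fun p =>
    (∀ x ∈ p.parts, 1 < x → ¬ x ≡ 1 [MOD 2 * t]) ∧ p.parts.sup < 8 * t ^ 2 + 1 ∧
      (∀ l ∈ p.parts, 2 ≤ l → p.parts.count l < 6 * t + 1) ∧
      12 * t + 3 ≤ p.parts.count 1

/-- `R_t^4(n)`: partitions in `R_t(n)` in which 1 appears an even number of times,
`f(8t+1) > 0`, and `f(2kt+1) = 0` for all `k ≥ 1` with `k ≠ 1, 4`. -/
noncomputable def Rt4 (t n : ℕ) : Finset (Nat.Partition n) :=
  (Rt t n).filter fun p =>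
    Even (p.parts.count 1) ∧ 0 < p.parts.count (8 * t + 1) ∧
      ∀ k, 1 ≤ k → k ≠ 1 → k ≠ 4 → p.parts.count (2 * k * t + 1) = 0

/-- The injection: remove `12t+3` copies of part `1`, add parts `2t+1, 2t+1, 8t+1`. -/
noncomputable def Fmap (t n : ℕ) (p : Nat.Partition n) : Nat.Partition n :=
  if h : Multiset.replicate (12 * t + 3) 1 ≤ p.parts then
    { parts := p.parts - Multiset.replicate (12 * t + 3) 1 +
        ({2 * t + 1, 2 * t + 1, 8 * t + 1} : Multiset ℕ),
      parts_pos := by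
        intro i hi
        rcases Multiset.mem_add.1 hi with h' | h'
        · exact p.parts_pos (Multiset.mem_of_le (Multiset.sub_le_self _ _) h')
        · simp only [Multiset.mem_cons, Multiset.mem_singleton,
            Multiset.insert_eq_cons] at h'
          rcases h' with rfl | rfl | rfl <;> omega
      parts_sum := by
        have h2 : (p.parts - Multiset.replicate (12 * t + 3) 1) +
            Multiset.replicate (12 * t + 3) 1 = p.parts := tsub_add_cancel_of_le h
        have h3 := congrArg Multiset.sum h2
        rw [Multiset.sum_add, Multiset.sum_replicate, smul_eq_mul, mul_one,
          p.parts_sum] at h3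
        rw [Multiset.sum_add]
        have h4 : ({2 * t + 1, 2 * t + 1, 8 * t + 1} : Multiset ℕ).sum = 12 * t + 3 := by
          simp only [Multiset.insert_eq_cons, Multiset.sum_cons, Multiset.sum_singleton]
          ring
        rw [h4]
        omega }
  else p

theorem card_Ot4_le_card_Rt4 (t n : ℕ) (ht : 2 ≤ t) :
    (Ot4 t n).card ≤ (Rt4 t n).card := by
  apply Finset.card_le_card_of_injOn (Fmap t n)
  · intro p hp
    simp only [Finset.mem_coe, Ot4, Ot, Finset.mem_filter, Finset.mem_univ, true_and] at hp
    obtain ⟨⟨hreg, hodd⟩, hmod, _, _, h1⟩ := hp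
    have hle : Multiset.replicate (12 * t + 3) 1 ≤ p.parts :=
      Multiset.le_count_iff_replicate_le.1 h1
    have hF : (Fmap t n p).parts = p.parts - Multiset.replicate (12 * t + 3) 1 +
        ({2 * t + 1, 2 * t + 1, 8 * t + 1} : Multiset ℕ) := by
      unfold Fmap; rw [dif_pos hle]
    simp only [Finset.mem_coe, Rt4, Rt, Finset.mem_filter, Finset.mem_univ, true_and]
    refine ⟨⟨?_, ?_⟩, ?_, ?_, ?_⟩
    · intro x hx hdvd
      rw [hF] at hx
      rcases Multiset.mem_add.1 hx with h' | h'
      · exact absurd hdvd (hreg x (Multiset.mem_of_le (Multiset.sub_le_self _ _) h'))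
      · exfalso
        simp only [Multiset.insert_eq_cons, Multiset.mem_cons, Multiset.mem_singleton] at h'
        have hd1 : t ∣ 1 := by
          rcases h' with rfl | rfl | rfl
          · exact (Nat.dvd_add_right (dvd_mul_left t 2)).mp hdvd
          · exact (Nat.dvd_add_right (dvd_mul_left t 2)).mp hdvd
          · exact (Nat.dvd_add_right (dvd_mul_left t 8)).mp hdvd
        have := Nat.le_of_dvd one_pos hd1
        omega
    · rw [hF]
      refine Multiset.mem_add.2 (Or.inr ?_)
      simp
    · rw [hF, Multiset.count_add, Multiset.count_sub, Multiset.count_replicate]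
      have hcnt0 : Multiset.count 1 ({2 * t + 1, 2 * t + 1, 8 * t + 1} : Multiset ℕ) = 0 := by
        simp only [Multiset.insert_eq_cons]
        rw [Multiset.count_cons_of_ne (by omega), Multiset.count_cons_of_ne (by omega),
          Multiset.count_singleton]
        simp only [if_neg (by omega : ¬ (1 : ℕ) = 8 * t + 1)]
      rw [hcnt0, if_pos rfl, add_zero]
      obtain ⟨m, hm⟩ := hodd
      refine ⟨m - (6 * t + 1), ?_⟩
      omega
    · rw [hF, Multiset.count_add]
      have : 0 < Multiset.count (8 * t + 1) ({2 * t + 1, 2 * t + 1, 8 * t + 1} : Multiset ℕ) :=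
        Multiset.count_pos.2 (by simp)
      omega
    · intro k hk hk1 hk4
      rw [hF, Multiset.count_add, Multiset.count_sub, Multiset.count_replicate]
      have hA : Multiset.count (2 * k * t + 1) p.parts = 0 := by
        rw [Multiset.count_eq_zero]
        intro hmem
        have hk2 : 2 ≤ 2 * k * t := by nlinarith
        refine hmod _ hmem (by omega) ?_
        show (2 * k * t + 1) % (2 * t) = 1 % (2 * t)
        have : 2 * k * t + 1 = 1 + 2 * t * k := by ring
        rw [this, Nat.add_mul_mod_self_left]
      have hB : Multiset.count (2 * k * t + 1)
          ({2 * t + 1, 2 * t + 1, 8 * t + 1} : Multiset ℕ) = 0 := by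
        simp only [Multiset.insert_eq_cons]
        rw [Multiset.count_cons_of_ne (by intro h; apply hk1; nlinarith),
          Multiset.count_cons_of_ne (by intro h; apply hk1; nlinarith),
          Multiset.count_singleton]
        rw [if_neg (by intro h; apply hk4; nlinarith)]
      rw [hA, hB]
      omega
  · intro p hp q hq hpq
    have hlp : Multiset.replicate (12 * t + 3) 1 ≤ p.parts := by
      simp only [Finset.coe_filter, Set.mem_setOf_eq, Ot4, Ot, Finset.mem_filter] at hp
      exact Multiset.le_count_iff_replicate_le.1 hp.2.2.2.2
    have hlq : Multiset.replicate (12 * t + 3) 1 ≤ q.parts := by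
      simp only [Finset.coe_filter, Set.mem_setOf_eq, Ot4, Ot, Finset.mem_filter] at hq
      exact Multiset.le_count_iff_replicate_le.1 hq.2.2.2.2
    have hFp : (Fmap t n p).parts = p.parts - Multiset.replicate (12 * t + 3) 1 +
        ({2 * t + 1, 2 * t + 1, 8 * t + 1} : Multiset ℕ) := by unfold Fmap; rw [dif_pos hlp]
    have hFq : (Fmap t n q).parts = q.parts - Multiset.replicate (12 * t + 3) 1 +
        ({2 * t + 1, 2 * t + 1, 8 * t + 1} : Multiset ℕ) := by unfold Fmap; rw [dif_pos hlq]
    have hparts : (Fmap t n p).parts = (Fmap t n q).parts := by rw [hpq]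
    rw [hFp, hFq] at hparts
    have h2 : p.parts - Multiset.replicate (12 * t + 3) 1 =
        q.parts - Multiset.replicate (12 * t + 3) 1 := by
      exact add_right_cancel hparts
    have hpe : p.parts = q.parts := by
      rw [← tsub_add_cancel_of_le hlp, ← tsub_add_cancel_of_le hlq, h2]
    cases p; cases q; simpa using hpe
end

section
/- Let t ≥ 2 and n ≥ 0 be integers with (t,n) ≠ (2,6). Then the coefficient of q^n in the formal power series D = ((q^t;q^t)_∞/(q^2;q)_∞) · (q^2 + q^4)/(1−q^6) − ((q^t;q^t)_∞/(q;q)_∞) · q^{2t−2}(1−q)(1−q^3)/(1−q^{2t}) is nonnegative. -/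
open Finset PowerSeries

namespace CoeffDAux

open scoped Classical

noncomputable section

/-! ### Material adapted from Archive/Wiedijk100Theorems/Partition.lean -/

variable {α : Type*}

/-- A convenience constructor for the power series whose coefficients indicate a subset. -/
def indicatorSeries (α : Type*) [Semiring α] (s : Set ℕ) : PowerSeries α :=
  PowerSeries.mk fun n => if n ∈ s then 1 else 0

theorem coeff_indicator (s : Set ℕ) [Semiring α] (n : ℕ) :
    coeff (R := α) n (indicatorSeries _ s) = if n ∈ s then 1 else 0 :=
  coeff_mk _ _

theorem coeff_indicator_pos (s : Set ℕ) [Semiring α] (n : ℕ) (h : n ∈ s) :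
    coeff (R := α) n (indicatorSeries _ s) = 1 := by rw [coeff_indicator, if_pos h]

theorem coeff_indicator_neg (s : Set ℕ) [Semiring α] (n : ℕ) (h : n ∉ s) :
    coeff (R := α) n (indicatorSeries _ s) = 0 := by rw [coeff_indicator, if_neg h]

theorem constantCoeff_indicator (s : Set ℕ) [Semiring α] :
    constantCoeff (R := α) (indicatorSeries _ s) = if 0 ∈ s then 1 else 0 :=
  rfl

theorem num_series' [Field α] (i : ℕ) :
    (1 - (X : PowerSeries α) ^ (i + 1))⁻¹ = indicatorSeries α {k | i + 1 ∣ k} := by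
  rw [PowerSeries.inv_eq_iff_mul_eq_one]
  · ext n
    cases n with
    | zero => simp [mul_sub, zero_pow, constantCoeff_indicator]
    | succ n =>
      simp only [coeff_one, if_false, mul_sub, mul_one, coeff_indicator,
        LinearMap.map_sub, reduceCtorEq]
      simp_rw [coeff_mul, coeff_X_pow, coeff_indicator, @boole_mul _ _ _ _]
      erw [@sum_ite _ _ _ _ _ (fun _ => Classical.propDecidable _), sum_ite]
      simp_rw [@filter_filter _ _ _ _ _, sum_const_zero, add_zero, sum_const, nsmul_eq_mul, mul_one,
        sub_eq_iff_eq_add, zero_add]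
      symm
      split_ifs with h
      · suffices #{a ∈ antidiagonal (n + 1) | i + 1 ∣ a.fst ∧ a.snd = i + 1} = 1 by
          simp only [Set.mem_setOf_eq]; convert congr_arg ((↑) : ℕ → α) this; norm_cast
        rw [card_eq_one]
        cases' h with p hp
        refine ⟨((i + 1) * (p - 1), i + 1), ?_⟩
        ext ⟨a₁, a₂⟩
        simp only [mem_filter, Prod.mk.injEq, HasAntidiagonal.mem_antidiagonal, mem_singleton]
        constructor
        · rintro ⟨a_left, ⟨a, rfl⟩, rfl⟩
          refine ⟨?_, rfl⟩
          rw [Nat.mul_sub_left_distrib, ← hp, ← a_left, mul_one, Nat.add_sub_cancel]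
        · rintro ⟨rfl, rfl⟩
          match p with
          | 0 => rw [mul_zero] at hp; cases hp
          | p + 1 => rw [hp]; simp [mul_add]
      · suffices #{a ∈ antidiagonal (n + 1) | i + 1 ∣ a.fst ∧ a.snd = i + 1} = 0 by
          simp only [Set.mem_setOf_eq]; convert congr_arg ((↑) : ℕ → α) this; norm_cast
        rw [card_eq_zero]
        apply eq_empty_of_forall_notMem
        simp only [Prod.forall, mem_filter, not_and, HasAntidiagonal.mem_antidiagonal]
        rintro _ h₁ h₂ ⟨a, rfl⟩ rfl
        apply h
        simp [← h₂]
  · simp [zero_pow]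

-- The main workhorse of the partition theorem proof.
theorem partialGF_prop (α : Type*) [CommSemiring α] (n : ℕ) (s : Finset ℕ) (hs : ∀ i ∈ s, 0 < i)
    (c : ℕ → Set ℕ) (hc : ∀ i, i ∉ s → 0 ∈ c i) :
    #{p : n.Partition | (∀ j, p.parts.count j ∈ c j) ∧ ∀ j ∈ p.parts, j ∈ s} =
      coeff (R := α) n (∏ i ∈ s, indicatorSeries α ((· * i) '' c i)) := by
  simp_rw [coeff_prod, coeff_indicator, prod_boole, sum_boole]
  apply congr_arg
  simp only [mem_univ, forall_true_left, not_and, not_forall, exists_prop,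
    Set.mem_image, not_exists]
  set φ : (a : Nat.Partition n) →
    a ∈ filter (fun p ↦ (∀ (j : ℕ), Multiset.count j p.parts ∈ c j) ∧ ∀ j ∈ p.parts, j ∈ s) univ →
    ℕ →₀ ℕ := fun p _ => {
      toFun := fun i => Multiset.count i p.parts • i
      support := Finset.filter (fun i => i ≠ 0) p.parts.toFinset
      mem_support_toFun := fun a => by
        simp only [smul_eq_mul, ne_eq, mul_eq_zero, Multiset.count_eq_zero]
        rw [not_or, not_not]
        simp only [Multiset.mem_toFinset, not_not, mem_filter] }
  refine Finset.card_bij φ ?_ ?_ ?_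
  · intro a ha
    simp only [φ, not_forall, not_exists, not_and, exists_prop, mem_filter]
    rw [mem_finsuppAntidiag]
    dsimp only [ne_eq, smul_eq_mul, id_eq, eq_mpr_eq_cast, le_eq_subset, Finsupp.coe_mk]
    simp only [mem_univ, forall_true_left, not_and, not_forall, exists_prop,
      mem_filter, true_and] at ha
    refine ⟨⟨?_, fun i ↦ ?_⟩, fun i _ ↦ ⟨a.parts.count i, ha.1 i, rfl⟩⟩
    · conv_rhs => simp [← a.parts_sum]
      rw [sum_multiset_count_of_subset _ s]
      · simp only [smul_eq_mul]
      · intro i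
        simp only [Multiset.mem_toFinset, not_not, mem_filter]
        apply ha.2
    · simp only [ne_eq, Multiset.mem_toFinset, not_not, mem_filter, and_imp]
      exact fun hi _ ↦ ha.2 i hi
  · intro p₁ hp₁ p₂ hp₂ h
    apply Nat.Partition.ext
    simp only [true_and, mem_univ, mem_filter] at hp₁ hp₂
    ext i
    simp only [φ, ne_eq, Multiset.mem_toFinset, not_not, smul_eq_mul, Finsupp.mk.injEq] at h
    by_cases hi : i = 0
    · rw [hi]
      rw [Multiset.count_eq_zero_of_notMem]
      · rw [Multiset.count_eq_zero_of_notMem]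
        intro a; exact Nat.lt_irrefl 0 (hs 0 (hp₂.2 0 a))
      intro a; exact Nat.lt_irrefl 0 (hs 0 (hp₁.2 0 a))
    · rw [← mul_left_inj' hi]
      rw [funext_iff] at h
      exact h.2 i
  · simp only [φ, mem_filter, mem_finsuppAntidiag, mem_univ, exists_prop, true_and, and_assoc]
    rintro f ⟨hf, hf₃, hf₄⟩
    have hf' : f ∈ finsuppAntidiag s n := mem_finsuppAntidiag.mpr ⟨hf, hf₃⟩
    simp only [mem_finsuppAntidiag] at hf'
    refine ⟨⟨∑ i ∈ s, Multiset.replicate (f i / i) i, ?_, ?_⟩, ?_, ?_, ?_⟩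
    · intro i hi
      simp only [exists_prop, Multiset.mem_sum, mem_map, Function.Embedding.coeFn_mk] at hi
      rcases hi with ⟨t, ht, z⟩
      apply hs
      rwa [Multiset.eq_of_mem_replicate z]
    · simp_rw [Multiset.sum_sum, Multiset.sum_replicate, Nat.nsmul_eq_mul]
      rw [← hf'.1]
      refine sum_congr rfl fun i hi => Nat.div_mul_cancel ?_
      rcases hf₄ i hi with ⟨w, _, hw₂⟩
      rw [← hw₂]
      exact dvd_mul_left _ _
    · intro i
      simp_rw [Multiset.count_sum', Multiset.count_replicate, sum_ite_eq']
      split_ifs with h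
      · rcases hf₄ i h with ⟨w, hw₁, hw₂⟩
        rwa [← hw₂, Nat.mul_div_cancel _ (hs i h)]
      · exact hc _ h
    · intro i hi
      rw [Multiset.mem_sum] at hi
      rcases hi with ⟨j, hj₁, hj₂⟩
      rwa [Multiset.eq_of_mem_replicate hj₂]
    · ext i
      simp_rw [Multiset.count_sum', Multiset.count_replicate, sum_ite_eq']
      simp only [ne_eq, Multiset.mem_toFinset, not_not, smul_eq_mul, ite_mul,
        zero_mul, Finsupp.coe_mk]
      split_ifs with h
      · apply Nat.div_mul_cancel
        rcases hf₄ i h with ⟨w, _, hw₂⟩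
        apply Dvd.intro_left _ hw₂
      · apply symm
        rw [← Finsupp.notMem_support_iff]
        exact notMem_mono hf'.2 h


/-! ### Truncation-equivalence framework -/

/-- `ind k` is the power series `∑_{k ∣ m} X^m`. -/
def dvdInd (k : ℕ) : PowerSeries ℚ := indicatorSeries ℚ {m | k ∣ m}

theorem one_sub_X_pow_inv {k : ℕ} (hk : 1 ≤ k) : (1 - (X : PowerSeries ℚ) ^ k)⁻¹ = dvdInd k := by
  obtain ⟨i, rfl⟩ : ∃ i, k = i + 1 := ⟨k - 1, by omega⟩
  exact num_series' i

theorem constCoeff_one_sub_X_pow {k : ℕ} (hk : 1 ≤ k) :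
    constantCoeff (R := ℚ) (1 - (X : PowerSeries ℚ) ^ k) = 1 := by
  rw [map_sub, map_one, map_pow, constantCoeff_X, zero_pow (by omega), sub_zero]

theorem one_sub_X_pow_mul_dvdInd {k : ℕ} (hk : 1 ≤ k) :
    (1 - (X : PowerSeries ℚ) ^ k) * dvdInd k = 1 := by
  rw [← one_sub_X_pow_inv hk]
  exact PowerSeries.mul_inv_cancel _ (by rw [constCoeff_one_sub_X_pow hk]; norm_num)

/-- Agreement of coefficients up to degree `n`. -/
def Eqn (n : ℕ) (f g : PowerSeries ℚ) : Prop := ∀ m ≤ n, coeff (R := ℚ) m f = coeff (R := ℚ) m g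

theorem Eqn.refl (n : ℕ) (f : PowerSeries ℚ) : Eqn n f f := fun _ _ => rfl

theorem Eqn.symm {n : ℕ} {f g : PowerSeries ℚ} (h : Eqn n f g) : Eqn n g f :=
  fun m hm => (h m hm).symm

theorem Eqn.trans {n : ℕ} {f g h : PowerSeries ℚ} (h1 : Eqn n f g) (h2 : Eqn n g h) :
    Eqn n f h := fun m hm => (h1 m hm).trans (h2 m hm)

theorem Eqn.coeff {n : ℕ} {f g : PowerSeries ℚ} (h : Eqn n f g) : coeff (R := ℚ) n f = coeff (R := ℚ) n g :=
  h n le_rfl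

theorem Eqn.mul {n : ℕ} {f g f' g' : PowerSeries ℚ} (hf : Eqn n f f') (hg : Eqn n g g') :
    Eqn n (f * g) (f' * g') := by
  intro m hm
  rw [coeff_mul, coeff_mul]
  refine Finset.sum_congr rfl ?_
  rintro ⟨i, j⟩ hij
  rw [Finset.HasAntidiagonal.mem_antidiagonal] at hij
  rw [hf i (by omega), hg j (by omega)]

theorem Eqn.sub {n : ℕ} {f g f' g' : PowerSeries ℚ} (hf : Eqn n f f') (hg : Eqn n g g') :
    Eqn n (f - g) (f' - g') := by
  intro m hm
  rw [map_sub, map_sub, hf m hm, hg m hm]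

theorem Eqn.prod {n : ℕ} {s : Finset ℕ} {f g : ℕ → PowerSeries ℚ}
    (h : ∀ i ∈ s, Eqn n (f i) (g i)) :
    Eqn n (∏ i ∈ s, f i) (∏ i ∈ s, g i) := by
  classical
  induction s using Finset.cons_induction with
  | empty => exact Eqn.refl n 1
  | cons a s ha ih =>
    rw [Finset.prod_cons, Finset.prod_cons]
    exact (h a (Finset.mem_cons_self a s)).mul (ih fun i hi => h i (Finset.mem_cons.2 (Or.inr hi)))

theorem eqn_one_sub_pow {n k : ℕ} (h : n < k) : Eqn n (1 - (X : PowerSeries ℚ) ^ k) 1 := by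
  intro m hm
  rw [map_sub, coeff_X_pow, if_neg (by omega), sub_zero]

theorem eqn_dvdInd {n k : ℕ} (h : n < k) : Eqn n (dvdInd k) 1 := by
  intro m hm
  rw [dvdInd, coeff_indicator]
  rcases Nat.eq_zero_or_pos m with rfl | hm0
  · simp
  · rw [if_neg, coeff_one, if_neg (by omega)]
    intro hdvd
    exact absurd (Nat.le_of_dvd hm0 hdvd) (by omega)

/-- The key stability lemma: products over index sets agreeing below `n`, of factors that are
trivial above `n`, have the same coefficients up to `n`. -/
theorem eqn_prod_of_agree {n : ℕ} (F : ℕ → PowerSeries ℚ) (hF : ∀ k, n < k → Eqn n (F k) 1)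
    (A B : Finset ℕ) (h : ∀ k, k ≤ n → (k ∈ A ↔ k ∈ B)) :
    Eqn n (∏ k ∈ A, F k) (∏ k ∈ B, F k) := by
  classical
  have key : ∀ C : Finset ℕ, Eqn n (∏ k ∈ C, F k) (∏ k ∈ C.filter (· ≤ n), F k) := by
    intro C
    rw [← Finset.prod_filter_mul_prod_filter_not C (· ≤ n)]
    have h1 : Eqn n (∏ k ∈ C.filter (fun k => ¬ k ≤ n), F k) 1 := by
      have := Eqn.prod (n := n) (s := C.filter (fun k => ¬ k ≤ n)) (f := F) (g := fun _ => 1)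
        (fun i hi => hF i (by simp only [Finset.mem_filter] at hi; omega))
      simpa using this
    have := (Eqn.refl n (∏ k ∈ C.filter (· ≤ n), F k)).mul h1
    simpa using this
  have hAB : A.filter (· ≤ n) = B.filter (· ≤ n) := by
    ext k
    simp only [Finset.mem_filter]
    constructor
    · rintro ⟨hk, hkn⟩; exact ⟨(h k hkn).1 hk, hkn⟩
    · rintro ⟨hk, hkn⟩; exact ⟨(h k hkn).2 hk, hkn⟩
  exact (key A).trans (hAB ▸ (key B).symm)


/-! ### Partition counts -/

/-- Number of partitions of `m` into parts that are `≥ 2` and not divisible by `t`. -/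
def cnt (t m : ℕ) : ℕ :=
  #(Finset.univ.filter fun p : m.Partition => ∀ j ∈ p.parts, 2 ≤ j ∧ ¬ t ∣ j)

theorem GF_count (s : Finset ℕ) (hs : ∀ i ∈ s, 0 < i) (n : ℕ) :
    ((#(Finset.univ.filter fun p : n.Partition => ∀ j ∈ p.parts, j ∈ s) : ℕ) : ℚ) =
      coeff (R := ℚ) n (∏ i ∈ s, dvdInd i) := by
  convert partialGF_prop ℚ n s hs (fun _ => Set.univ) (fun _ _ => trivial) using 2
  · congr 1
  · congr 1
    apply Finset.filter_congr
    intro p _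
    simp
  · apply Finset.prod_congr rfl
    intro i _
    have hset : {m | i ∣ m} = (· * i) '' Set.univ := by
      ext k
      simp only [Set.mem_setOf_eq, Set.mem_image, Set.mem_univ, true_and]
      constructor
      · rintro ⟨p, rfl⟩
        exact ⟨p, mul_comm p i⟩
      · rintro ⟨a, rfl⟩
        exact Dvd.intro_left a rfl
    rw [dvdInd, hset]

def sfin (t n : ℕ) : Finset ℕ := (Finset.range (n + 1)).filter fun k => 2 ≤ k ∧ ¬ t ∣ k

theorem mem_sfin {t n k : ℕ} : k ∈ sfin t n ↔ k ≤ n ∧ 2 ≤ k ∧ ¬ t ∣ k := by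
  simp only [sfin, Finset.mem_filter, Finset.mem_range]
  omega

theorem coeff_GFsfin_eq_cnt (t n : ℕ) :
    coeff (R := ℚ) n (∏ k ∈ sfin t n, dvdInd k) = (cnt t n : ℚ) := by
  rw [← GF_count (sfin t n) (fun i hi => by rw [mem_sfin] at hi; omega) n]
  norm_cast
  rw [cnt]
  apply congrArg
  apply Finset.filter_congr
  intro p _
  have hle : ∀ j ∈ p.parts, j ≤ n := by
    intro j hj
    simpa [p.parts_sum] using Multiset.single_le_sum (fun _ _ => Nat.zero_le _) _ hj
  constructor
  · intro h j hj
    exact (mem_sfin.1 (h j hj)).2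
  · intro h j hj
    exact mem_sfin.2 ⟨hle j hj, h j hj⟩

/-- The coefficientwise-stable full generating function `∏_{k ≥ 2, t ∤ k} (1 - X^k)⁻¹`. -/
def fullG (t : ℕ) : PowerSeries ℚ :=
  PowerSeries.mk fun n => coeff (R := ℚ) n (∏ k ∈ sfin t n, dvdInd k)

theorem coeff_fullG (t n : ℕ) : coeff (R := ℚ) n (fullG t) = (cnt t n : ℚ) := by
  rw [fullG, coeff_mk, coeff_GFsfin_eq_cnt]

theorem eqn_fullG (t n : ℕ) : Eqn n (fullG t) (∏ k ∈ sfin t n, dvdInd k) := by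
  intro m hm
  rw [fullG, coeff_mk]
  refine (eqn_prod_of_agree dvdInd (fun k hk => eqn_dvdInd hk) (sfin t m) (sfin t n) ?_).coeff
  intro k hk
  rw [mem_sfin, mem_sfin]
  omega

theorem multiset_sup_mem {s : Multiset ℕ} (h : s ≠ 0) : s.sup ∈ s := by
  induction s using Multiset.induction with
  | empty => exact absurd rfl h
  | cons a s ih =>
    rw [Multiset.sup_cons]
    rcases eq_or_ne s 0 with rfl | hs
    · simp
    · rcases le_total a s.sup with h1 | h1
      · rw [sup_eq_right.2 h1]
        exact Multiset.mem_cons_of_mem (ih hs)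
      · rw [sup_eq_left.2 h1]
        exact Multiset.mem_cons_self a s

theorem cnt_le_add {t p : ℕ} (m : ℕ) (hp2 : 2 ≤ p) (hpt : ¬ t ∣ p) :
    cnt t m ≤ cnt t (m + p) := by
  refine Finset.card_le_card_of_injOn
    (fun P => ⟨p ::ₘ P.parts, ?_, ?_⟩) ?_ ?_
  · intro j hj
    rcases Multiset.mem_cons.1 hj with rfl | hj
    · omega
    · exact P.parts_pos hj
  · rw [Multiset.sum_cons, P.parts_sum, add_comm]
  · intro P hP
    simp only [Finset.mem_coe, Finset.mem_filter, Finset.mem_univ, true_and] at hP ⊢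
    intro j hj
    rcases Multiset.mem_cons.1 hj with rfl | hj
    · exact ⟨hp2, hpt⟩
    · exact hP j hj
  · intro P₁ _ P₂ _ h
    have := congrArg Nat.Partition.parts h
    simp only at this
    exact Nat.Partition.ext ((Multiset.cons_inj_right p).1 this)

theorem cnt_two_le (m : ℕ) (hm : 1 ≤ m) : cnt 2 m ≤ cnt 2 (m + 2) := by
  have hne : ∀ P : m.Partition, P.parts ≠ 0 := by
    intro P h
    have h2 := P.parts_sum
    rw [h] at h2
    simp only [Multiset.sum_zero] at h2
    omega
  have hmem : ∀ P : m.Partition, P.parts.sup ∈ P.parts := fun P => multiset_sup_mem (hne P)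
  have hsum : ∀ P : m.Partition, P.parts.sup + (P.parts.erase P.parts.sup).sum = m := by
    intro P
    have := congrArg Multiset.sum (Multiset.cons_erase (hmem P))
    rw [Multiset.sum_cons, P.parts_sum] at this
    exact this
  refine Finset.card_le_card_of_injOn
    (fun P => ⟨(P.parts.sup + 2) ::ₘ P.parts.erase P.parts.sup, ?_, ?_⟩) ?_ ?_
  · intro j hj
    rcases Multiset.mem_cons.1 hj with rfl | hj
    · omega
    · exact P.parts_pos (Multiset.mem_of_mem_erase hj)
  · rw [Multiset.sum_cons]
    have := hsum P
    omega
  · intro P hP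
    simp only [Finset.mem_coe, Finset.mem_filter, Finset.mem_univ, true_and] at hP ⊢
    intro j hj
    rcases Multiset.mem_cons.1 hj with rfl | hj
    · have h2 := hP _ (hmem P)
      exact ⟨by omega, fun hdvd => h2.2 (by omega)⟩
    · exact hP j (Multiset.mem_of_mem_erase hj)
  · intro P₁ _ P₂ _ h
    have hparts := congrArg Nat.Partition.parts h
    simp only at hparts
    have hsup : ∀ P : m.Partition,
        ((P.parts.sup + 2) ::ₘ P.parts.erase P.parts.sup).sup = P.parts.sup + 2 := by
      intro P
      rw [Multiset.sup_cons]
      refine sup_eq_left.2 ?_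
      refine Multiset.sup_le.2 fun b hb => ?_
      have := Multiset.le_sup (Multiset.mem_of_mem_erase hb)
      omega
    have hM : P₁.parts.sup = P₂.parts.sup := by
      have := congrArg Multiset.sup hparts
      rw [hsup P₁, hsup P₂] at this
      omega
    apply Nat.Partition.ext
    rw [hM] at hparts
    have herase := (Multiset.cons_inj_right _).1 hparts
    have e1 := Multiset.cons_erase (hmem P₁)
    have e2 := Multiset.cons_erase (hmem P₂)
    rw [← e1, ← e2, hM, herase]


/-! ### qpoch identities -/

theorem eqn_qpoch {a d : ℕ} (ha : 1 ≤ a) (hd : 1 ≤ d) (n K : ℕ) (hK : n + 1 ≤ K) :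
    Eqn n (qpoch a d) (∏ i ∈ Finset.range K, (1 - (X : PowerSeries ℚ) ^ (a + d * i))) := by
  intro m hm
  rw [qpoch, coeff_mk]
  refine (eqn_prod_of_agree (fun i => 1 - (X : PowerSeries ℚ) ^ (a + d * i))
    (fun k hk => eqn_one_sub_pow ?_) (Finset.range (m + 1)) (Finset.range K) ?_).coeff
  · have : k ≤ d * k := Nat.le_mul_of_pos_left k (by omega)
    omega
  · intro k hk
    simp only [Finset.mem_range]
    omega

theorem constCoeff_qpoch {a d : ℕ} (ha : 1 ≤ a) : constantCoeff (R := ℚ) (qpoch a d) = 1 := by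
  rw [← coeff_zero_eq_constantCoeff, qpoch, coeff_mk, zero_add, Finset.prod_range_one,
    mul_zero, add_zero, coeff_zero_eq_constantCoeff]
  exact constCoeff_one_sub_X_pow ha

theorem qpoch_one_eq : qpoch 1 1 = (1 - X) * qpoch 2 1 := by
  ext n
  have h11 := eqn_qpoch (a := 1) (d := 1) le_rfl le_rfl n (n + 2) (by omega)
  have h21 := eqn_qpoch (a := 2) (d := 1) (by omega) le_rfl n (n + 1) le_rfl
  rw [h11.coeff, ((Eqn.refl n (1 - X)).mul h21).coeff]
  congr 1
  rw [Finset.prod_range_succ']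
  rw [mul_zero, add_zero, pow_one, mul_comm]
  congr 1
  refine Finset.prod_congr rfl fun i _ => ?_
  congr 2
  omega

theorem qpoch_t_eq (t : ℕ) (ht : 2 ≤ t) : qpoch t t = qpoch 2 1 * fullG t := by
  ext n
  have h21 := eqn_qpoch (a := 2) (d := 1) (by omega) le_rfl n (n + 1) le_rfl
  have htt := eqn_qpoch (a := t) (d := t) (by omega) (by omega) n (n + 1) le_rfl
  rw [htt.coeff, (h21.mul (eqn_fullG t n)).coeff]
  -- rewrite the range-products as products over exponent sets
  have e2 : (∏ i ∈ Finset.range (n + 1), (1 - (X : PowerSeries ℚ) ^ (2 + 1 * i)))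
      = ∏ k ∈ (Finset.range (n + 1)).image (fun i => 2 + i), (1 - (X : PowerSeries ℚ) ^ k) := by
    rw [Finset.prod_image (fun x _ y _ h => by omega)]
    exact Finset.prod_congr rfl fun i _ => by rw [one_mul]
  have e3 : (∏ i ∈ Finset.range (n + 1), (1 - (X : PowerSeries ℚ) ^ (t + t * i)))
      = ∏ k ∈ (Finset.range (n + 1)).image (fun i => t + t * i),
          (1 - (X : PowerSeries ℚ) ^ k) := by
    rw [Finset.prod_image (fun x _ y _ h => by
      have h2 : t * x = t * y := Nat.add_left_cancel h
      exact Nat.eq_of_mul_eq_mul_left (by omega) h2)]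
  rw [e2, e3]
  set B := (Finset.range (n + 1)).image (fun i => 2 + i) with hB
  set A := (Finset.range (n + 1)).image (fun i => t + t * i) with hA
  -- split B into multiples of t and the rest
  rw [← Finset.prod_filter_mul_prod_filter_not B (fun k => t ∣ k)]
  -- the nondivisible part cancels with the dvdInd product, up to degree n
  have hS1 : ∀ k ∈ sfin t n, (1 : ℕ) ≤ k := fun k hk => by
    rw [mem_sfin] at hk; omega
  have hcancel : (∏ k ∈ sfin t n, (1 - (X : PowerSeries ℚ) ^ k)) * (∏ k ∈ sfin t n, dvdInd k)
      = 1 := by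
    rw [← Finset.prod_mul_distrib]
    rw [Finset.prod_congr rfl fun k hk => one_sub_X_pow_mul_dvdInd (hS1 k hk)]
    exact Finset.prod_const_one
  have hnd : Eqn n (∏ k ∈ B.filter (fun k => ¬ t ∣ k), (1 - (X : PowerSeries ℚ) ^ k))
      (∏ k ∈ sfin t n, (1 - (X : PowerSeries ℚ) ^ k)) := by
    refine eqn_prod_of_agree _ (fun k hk => eqn_one_sub_pow hk) _ _ ?_
    intro k hk
    simp only [Finset.mem_filter, hB, Finset.mem_image, Finset.mem_range, mem_sfin]
    constructor
    · rintro ⟨⟨i, hi, rfl⟩, hnd⟩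
      exact ⟨hk, by omega, hnd⟩
    · rintro ⟨-, h2, hnd⟩
      exact ⟨⟨k - 2, by omega, by omega⟩, hnd⟩
  have hd2 : Eqn n (∏ k ∈ B.filter (fun k => t ∣ k), (1 - (X : PowerSeries ℚ) ^ k))
      (∏ k ∈ A, (1 - (X : PowerSeries ℚ) ^ k)) := by
    refine eqn_prod_of_agree _ (fun k hk => eqn_one_sub_pow hk) _ _ ?_
    intro k hk
    simp only [Finset.mem_filter, hB, hA, Finset.mem_image, Finset.mem_range]
    constructor
    · rintro ⟨⟨i, hi, rfl⟩, c, hc⟩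
      rcases c with _ | e
      · omega
      · have hr : t * (e + 1) = t + t * e := by ring
        have h1 : e + 1 ≤ t * (e + 1) := Nat.le_mul_of_pos_left (e + 1) (by omega)
        exact ⟨e, by omega, by omega⟩
    · rintro ⟨i, hi, rfl⟩
      have h0 : (0 : ℕ) ≤ t * i := Nat.zero_le _
      refine ⟨⟨t + t * i - 2, by omega, by omega⟩, i + 1, by ring⟩
  -- combine
  calc coeff (R := ℚ) n (∏ k ∈ A, (1 - (X : PowerSeries ℚ) ^ k))
      = coeff (R := ℚ) n ((∏ k ∈ A, (1 - (X : PowerSeries ℚ) ^ k)) * 1) := by rw [mul_one]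
    _ = coeff (R := ℚ) n ((∏ k ∈ B.filter (fun k => t ∣ k), (1 - (X : PowerSeries ℚ) ^ k)) *
          ((∏ k ∈ sfin t n, (1 - (X : PowerSeries ℚ) ^ k)) * (∏ k ∈ sfin t n, dvdInd k))) := by
        rw [hcancel]
        exact (hd2.symm.mul (Eqn.refl n 1)).coeff
    _ = coeff (R := ℚ) n ((∏ k ∈ B.filter (fun k => t ∣ k), (1 - (X : PowerSeries ℚ) ^ k)) *
          ((∏ k ∈ B.filter (fun k => ¬ t ∣ k), (1 - (X : PowerSeries ℚ) ^ k)) *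
            (∏ k ∈ sfin t n, dvdInd k))) :=
        ((Eqn.refl n _).mul ((hnd.symm).mul (Eqn.refl n _))).coeff
    _ = coeff (R := ℚ) n ((∏ k ∈ B.filter (fun k => t ∣ k), (1 - (X : PowerSeries ℚ) ^ k)) *
          (∏ k ∈ B.filter (fun k => ¬ t ∣ k), (1 - (X : PowerSeries ℚ) ^ k)) *
            (∏ k ∈ sfin t n, dvdInd k)) := by rw [mul_assoc]


/-! ### The bracket series and its coefficients -/

theorem coeff_dvdInd (k m : ℕ) : coeff (R := ℚ) m (dvdInd k) = if k ∣ m then 1 else 0 := by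
  rw [dvdInd, coeff_indicator]
  by_cases h : k ∣ m
  · rw [if_pos (show m ∈ {m | k ∣ m} from h), if_pos h]
  · rw [if_neg (show m ∉ {m | k ∣ m} from h), if_neg h]

def Br (t : ℕ) : PowerSeries ℚ :=
  ((X : PowerSeries ℚ) ^ 2 + X ^ 4) * dvdInd 6 - X ^ (2 * t - 2) * (1 - X ^ 3) * dvdInd (2 * t)

theorem coeff_Br (t j : ℕ) (ht : 2 ≤ t) :
    coeff (R := ℚ) j (Br t) =
      (if j % 6 = 2 ∨ j % 6 = 4 then (1 : ℚ) else 0)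
        - (if 2 * t ∣ j + 2 then (1 : ℚ) else 0)
        + (if 2 * t ∣ j - 1 ∧ 2 * t + 1 ≤ j then (1 : ℚ) else 0) := by
  have c1 : coeff (R := ℚ) j (((X : PowerSeries ℚ) ^ 2 + X ^ 4) * dvdInd 6)
      = (if j % 6 = 2 ∨ j % 6 = 4 then (1 : ℚ) else 0) := by
    rw [add_mul, map_add, coeff_X_pow_mul', coeff_X_pow_mul']
    simp only [dvdInd, coeff_indicator, Set.mem_setOf_eq]
    split_ifs <;> norm_num <;> omega
  have c2 : coeff (R := ℚ) j ((X : PowerSeries ℚ) ^ (2 * t - 2) * (1 - X ^ 3) * dvdInd (2 * t))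
      = (if 2 * t ∣ j + 2 then (1 : ℚ) else 0)
          - (if 2 * t ∣ j - 1 ∧ 2 * t + 1 ≤ j then (1 : ℚ) else 0) := by
    have hsplit : (X : PowerSeries ℚ) ^ (2 * t - 2) * (1 - X ^ 3) * dvdInd (2 * t)
        = X ^ (2 * t - 2) * dvdInd (2 * t) - X ^ (2 * t + 1) * dvdInd (2 * t) := by
      rw [mul_sub, mul_one, ← pow_add, show 2 * t - 2 + 3 = 2 * t + 1 from by omega, sub_mul]
    rw [hsplit, map_sub, coeff_X_pow_mul', coeff_X_pow_mul', coeff_dvdInd, coeff_dvdInd]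
    have e2 : (if 2 * t - 2 ≤ j then (if 2 * t ∣ j - (2 * t - 2) then (1 : ℚ) else 0) else 0)
        = if 2 * t ∣ j + 2 then (1 : ℚ) else 0 := by
      by_cases h : 2 * t ∣ j + 2
      · have hj : 2 * t ≤ j + 2 := Nat.le_of_dvd (by omega) h
        have hin : 2 * t ∣ j - (2 * t - 2) := by
          have he : j - (2 * t - 2) = (j + 2) - 2 * t := by omega
          rw [he]
          exact Nat.dvd_sub h dvd_rfl
        rw [if_pos (show 2 * t - 2 ≤ j by omega), if_pos hin, if_pos h]
      · rw [if_neg h]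
        split_ifs with h1 h2
        · exfalso
          apply h
          have he : j + 2 = (j - (2 * t - 2)) + 2 * t := by omega
          rw [he]
          exact dvd_add h2 dvd_rfl
        · rfl
        · rfl
    have e3 : (if 2 * t + 1 ≤ j then (if 2 * t ∣ j - (2 * t + 1) then (1 : ℚ) else 0) else 0)
        = if 2 * t ∣ j - 1 ∧ 2 * t + 1 ≤ j then (1 : ℚ) else 0 := by
      by_cases h : 2 * t ∣ j - 1 ∧ 2 * t + 1 ≤ j
      · have hin : 2 * t ∣ j - (2 * t + 1) := by
          have he : j - (2 * t + 1) = (j - 1) - 2 * t := by omega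
          rw [he]
          exact Nat.dvd_sub h.1 dvd_rfl
        rw [if_pos h.2, if_pos hin, if_pos h]
      · rw [if_neg h]
        split_ifs with h1 h2
        · exfalso
          apply h
          refine ⟨?_, h1⟩
          have he : j - 1 = (j - (2 * t + 1)) + 2 * t := by omega
          rw [he]
          exact dvd_add h2 dvd_rfl
        · rfl
        · rfl
    rw [e2, e3]
  rw [Br, map_sub, c1, c2]
  ring

theorem two_dvd_two_mul (t : ℕ) : (2 : ℕ) ∣ 2 * t := ⟨t, rfl⟩

theorem coeff_Br_neg {t j : ℕ} (ht : 2 ≤ t) (h1 : 2 * t ∣ j + 2) (h3 : 3 ∣ j) :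
    coeff (R := ℚ) j (Br t) = -1 := by
  rw [coeff_Br t j ht]
  have heven : 2 ∣ j + 2 := dvd_trans (two_dvd_two_mul t) h1
  have hs : ¬ (j % 6 = 2 ∨ j % 6 = 4) := by omega
  have ht3 : ¬ (2 * t ∣ j - 1 ∧ 2 * t + 1 ≤ j) := by
    rintro ⟨hd, hj⟩
    have h2' : 2 ∣ j - 1 := dvd_trans (two_dvd_two_mul t) hd
    omega
  rw [if_neg hs, if_pos h1, if_neg ht3]
  norm_num

theorem coeff_Br_nonneg' {t j : ℕ} (ht : 2 ≤ t) (h : ¬ (2 * t ∣ j + 2 ∧ 3 ∣ j)) :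
    0 ≤ coeff (R := ℚ) j (Br t) := by
  rw [coeff_Br t j ht]
  by_cases h1 : 2 * t ∣ j + 2
  · have h3 : ¬ 3 ∣ j := fun hc => h ⟨h1, hc⟩
    have heven : 2 ∣ j + 2 := dvd_trans (two_dvd_two_mul t) h1
    have hs : j % 6 = 2 ∨ j % 6 = 4 := by omega
    rw [if_pos hs, if_pos h1]
    split_ifs <;> norm_num
  · rw [if_neg h1]
    split_ifs <;> norm_num

theorem coeff_Br_pair_ge3 {t j : ℕ} (ht : 3 ≤ t) (h1 : 2 * t ∣ j + 2) (h3 : 3 ∣ j) :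
    coeff (R := ℚ) (j - 2) (Br t) = 1 := by
  rw [coeff_Br t (j - 2) (by omega)]
  have heven : 2 ∣ j + 2 := dvd_trans (two_dvd_two_mul t) h1
  have hj : 2 * t ≤ j + 2 := Nat.le_of_dvd (by omega) h1
  have hs : (j - 2) % 6 = 2 ∨ (j - 2) % 6 = 4 := by omega
  have htP : ¬ 2 * t ∣ (j - 2) + 2 := by
    intro hd
    rw [show (j - 2) + 2 = j from by omega] at hd
    have h2 : 2 * t ∣ 2 := by
      have := Nat.dvd_sub h1 hd
      rwa [show j + 2 - j = 2 from by omega] at this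
    have := Nat.le_of_dvd (by omega) h2
    omega
  have ht3 : ¬ (2 * t ∣ (j - 2) - 1 ∧ 2 * t + 1 ≤ j - 2) := by
    rintro ⟨hd, hjj⟩
    have h2' : 2 ∣ (j - 2) - 1 := dvd_trans (two_dvd_two_mul t) hd
    omega
  rw [if_pos hs, if_neg htP, if_neg ht3]
  norm_num

theorem coeff_Br_pair_t2a : coeff (R := ℚ) 4 (Br 2) = 1 := by
  rw [coeff_Br 2 4 le_rfl]
  norm_num

theorem coeff_Br_pair_t2b {j : ℕ} (hj : j % 12 = 6) (hj18 : 18 ≤ j) :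
    coeff (R := ℚ) (j - 9) (Br 2) = 1 := by
  rw [coeff_Br 2 (j - 9) le_rfl]
  have hs : ¬ ((j - 9) % 6 = 2 ∨ (j - 9) % 6 = 4) := by omega
  have htP : ¬ (2 * 2 ∣ (j - 9) + 2) := by
    simp only [show 2 * 2 = 4 from rfl]
    omega
  have ht3 : 2 * 2 ∣ (j - 9) - 1 ∧ 2 * 2 + 1 ≤ j - 9 := by
    simp only [show 2 * 2 = 4 from rfl]
    constructor
    · omega
    · omega
  rw [if_neg hs, if_neg htP, if_pos ht3]
  norm_num


/-! ### Final assembly -/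

theorem D_eq (t : ℕ) (ht : 2 ≤ t) :
    qpoch t t * (qpoch 2 1)⁻¹ * ((X ^ 2 + X ^ 4) * (1 - X ^ 6)⁻¹)
      - qpoch t t * (qpoch 1 1)⁻¹
          * (X ^ (2 * t - 2) * (1 - X) * (1 - X ^ 3) * (1 - X ^ (2 * t))⁻¹)
    = fullG t * Br t := by
  have hc21 : constantCoeff (R := ℚ) (qpoch 2 1) ≠ 0 := by
    rw [constCoeff_qpoch (by omega)]; norm_num
  have h1X : (1 - (X : PowerSeries ℚ)) = 1 - X ^ 1 := by rw [pow_one]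
  have hc1X : constantCoeff (R := ℚ) (1 - (X : PowerSeries ℚ)) ≠ 0 := by
    rw [h1X, constCoeff_one_sub_X_pow le_rfl]; norm_num
  have e1 : qpoch t t * (qpoch 2 1)⁻¹ = fullG t := by
    rw [qpoch_t_eq t ht, mul_comm (qpoch 2 1) (fullG t), mul_assoc,
      PowerSeries.mul_inv_cancel _ hc21, mul_one]
  have e2 : qpoch t t * (qpoch 1 1)⁻¹ * (1 - X) = fullG t := by
    rw [qpoch_t_eq t ht, qpoch_one_eq, PowerSeries.mul_inv_rev]
    have c1 : qpoch 2 1 * (qpoch 2 1)⁻¹ = 1 := PowerSeries.mul_inv_cancel _ hc21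
    have c2 : (1 - (X : PowerSeries ℚ)) * (1 - X)⁻¹ = 1 := PowerSeries.mul_inv_cancel _ hc1X
    calc qpoch 2 1 * fullG t * ((qpoch 2 1)⁻¹ * (1 - X)⁻¹) * (1 - X)
        = qpoch 2 1 * (qpoch 2 1)⁻¹ * ((1 - X) * (1 - X)⁻¹) * fullG t := by ring
      _ = fullG t := by rw [c1, c2, one_mul, one_mul]
  have e6 : (1 - (X : PowerSeries ℚ) ^ 6)⁻¹ = dvdInd 6 := one_sub_X_pow_inv (by norm_num)
  have e2t : (1 - (X : PowerSeries ℚ) ^ (2 * t))⁻¹ = dvdInd (2 * t) :=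
    one_sub_X_pow_inv (by omega)
  rw [e6, e2t]
  have eterm2 : qpoch t t * (qpoch 1 1)⁻¹
        * (X ^ (2 * t - 2) * (1 - X) * (1 - X ^ 3) * dvdInd (2 * t))
      = fullG t * (X ^ (2 * t - 2) * (1 - X ^ 3) * dvdInd (2 * t)) := by
    rw [← e2]; ring
  rw [eterm2, e1, Br]
  ring

theorem g_nonneg (t m : ℕ) : 0 ≤ coeff (R := ℚ) m (fullG t) := by
  rw [coeff_fullG]
  exact Nat.cast_nonneg _

theorem g_mono_add {t : ℕ} {p : ℕ} (hp2 : 2 ≤ p) (hpt : ¬ t ∣ p) (m : ℕ) :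
    coeff (R := ℚ) m (fullG t) ≤ coeff (R := ℚ) (m + p) (fullG t) := by
  rw [coeff_fullG, coeff_fullG]
  exact_mod_cast cnt_le_add m hp2 hpt

theorem g2_mono {m : ℕ} (hm : 1 ≤ m) : coeff (R := ℚ) m (fullG 2) ≤ coeff (R := ℚ) (m + 2) (fullG 2) := by
  rw [coeff_fullG, coeff_fullG]
  exact_mod_cast cnt_two_le m hm

def negP (t j : ℕ) : Prop := 2 * t ∣ j + 2 ∧ 3 ∣ j

def phi (t j : ℕ) : ℕ := if t = 2 then (if j = 6 then 4 else j - 9) else j - 2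

theorem phi_le (t j : ℕ) : phi t j ≤ j ∨ (j = 6 ∧ phi t j = 4) := by
  unfold phi
  split_ifs <;> omega

theorem coeff_mul_Br_nonneg (t n : ℕ) (ht : 2 ≤ t) (htn : ¬ (t = 2 ∧ n = 6)) :
    0 ≤ coeff (R := ℚ) n (fullG t * Br t) := by
  rw [mul_comm, coeff_mul, Finset.Nat.sum_antidiagonal_eq_sum_range_succ_mk]
  simp only
  set A : Finset ℕ := (Finset.range (n + 1)).filter (negP t) with hA
  set R : Finset ℕ := (Finset.range (n + 1)).filter (fun j => ¬ negP t j) with hR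
  have hmemA : ∀ j ∈ A, j ≤ n ∧ 2 * t ∣ j + 2 ∧ 3 ∣ j := by
    intro j hj
    rw [hA, Finset.mem_filter, Finset.mem_range] at hj
    exact ⟨by omega, hj.2⟩
  have hjge : ∀ j ∈ A, 2 * t - 2 ≤ j := by
    intro j hj
    obtain ⟨-, h1, -⟩ := hmemA j hj
    have := Nat.le_of_dvd (by omega) h1
    omega
  have hmod12 : t = 2 → ∀ j ∈ A, j % 12 = 6 := by
    intro ht2 j hj
    obtain ⟨-, h1, h3⟩ := hmemA j hj
    rw [ht2] at h1
    have h4 : (4 : ℕ) ∣ j + 2 := by norm_num at h1 ⊢; exact h1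
    omega
  have hφA : ∀ j ∈ A, phi t j ∈ R := by
    intro j hj
    obtain ⟨hjn, h1, h3⟩ := hmemA j hj
    have hge := hjge j hj
    rw [hR, Finset.mem_filter, Finset.mem_range]
    constructor
    · rcases phi_le t j with h | ⟨h6, h4⟩ <;> omega
    · unfold phi negP
      by_cases ht2 : t = 2
      · subst ht2
        have h12 := hmod12 rfl j hj
        rw [if_pos rfl]
        by_cases hj6 : j = 6
        · rw [if_pos hj6]
          rintro ⟨hd, -⟩
          norm_num at hd
        · rw [if_neg hj6]
          have hj18 : 18 ≤ j := by omega
          rintro ⟨hd, -⟩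
          have h4 : (4 : ℕ) ∣ (j - 9) + 2 := by norm_num at hd ⊢; exact hd
          omega
      · rw [if_neg ht2]
        rintro ⟨hd, -⟩
        rw [show (j - 2) + 2 = j from by omega] at hd
        have h2 : 2 * t ∣ 2 := by
          have := Nat.dvd_sub h1 hd
          rwa [show j + 2 - j = 2 from by omega] at this
        have := Nat.le_of_dvd (by omega) h2
        omega
  have hφBr : ∀ j ∈ A, coeff (R := ℚ) (phi t j) (Br t) = 1 := by
    intro j hj
    obtain ⟨hjn, h1, h3⟩ := hmemA j hj
    unfold phi
    by_cases ht2 : t = 2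
    · subst ht2
      have h12 := hmod12 rfl j hj
      rw [if_pos rfl]
      by_cases hj6 : j = 6
      · rw [if_pos hj6]
        exact coeff_Br_pair_t2a
      · rw [if_neg hj6]
        exact coeff_Br_pair_t2b h12 (by omega)
    · rw [if_neg ht2]
      exact coeff_Br_pair_ge3 (by omega) h1 h3
  have hφg : ∀ j ∈ A, coeff (R := ℚ) (n - j) (fullG t) ≤ coeff (R := ℚ) (n - phi t j) (fullG t) := by
    intro j hj
    obtain ⟨hjn, h1, h3⟩ := hmemA j hj
    have hge := hjge j hj
    unfold phi
    by_cases ht2 : t = 2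
    · subst ht2
      have h12 := hmod12 rfl j hj
      rw [if_pos rfl]
      by_cases hj6 : j = 6
      · subst hj6
        rw [if_pos rfl]
        have hn7 : 7 ≤ n := by
          rcases Nat.lt_or_ge n 7 with h | h
          · exfalso
            exact htn ⟨rfl, by omega⟩
          · exact h
        rw [show n - 4 = (n - 6) + 2 from by omega]
        exact g2_mono (by omega)
      · rw [if_neg hj6]
        have hj18 : 18 ≤ j := by omega
        have hd3 : ¬ (2 : ℕ) ∣ 3 := by norm_num
        calc coeff (R := ℚ) (n - j) (fullG 2) ≤ coeff (R := ℚ) ((n - j) + 3) (fullG 2) :=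
              g_mono_add (by norm_num) hd3 _
          _ ≤ coeff (R := ℚ) (((n - j) + 3) + 3) (fullG 2) := g_mono_add (by norm_num) hd3 _
          _ ≤ coeff (R := ℚ) ((((n - j) + 3) + 3) + 3) (fullG 2) := g_mono_add (by norm_num) hd3 _
          _ = coeff (R := ℚ) (n - (j - 9)) (fullG 2) := by
              rw [show n - (j - 9) = n - j + 3 + 3 + 3 from by omega]
    · rw [if_neg ht2]
      have hdt2 : ¬ t ∣ 2 := fun hd => by
        have := Nat.le_of_dvd (by omega) hd
        omega
      rw [show n - (j - 2) = (n - j) + 2 from by omega]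
      exact g_mono_add le_rfl hdt2 _
  have hinj : ∀ j ∈ A, ∀ j' ∈ A, phi t j = phi t j' → j = j' := by
    intro j hj j' hj'
    have h1 := hjge j hj
    have h2 := hjge j' hj'
    unfold phi
    by_cases ht2 : t = 2
    · subst ht2
      have e1 := hmod12 rfl j hj
      have e2 := hmod12 rfl j' hj'
      rw [if_pos rfl]
      intro hh
      split_ifs at hh <;> omega
    · simp only [if_neg ht2]
      intro hh
      omega
  have hAneg : ∀ j ∈ A, coeff (R := ℚ) j (Br t) * coeff (R := ℚ) (n - j) (fullG t)
      = - coeff (R := ℚ) (n - j) (fullG t) := by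
    intro j hj
    obtain ⟨-, h1, h3⟩ := hmemA j hj
    rw [coeff_Br_neg ht h1 h3]
    ring
  have hRnn : ∀ j ∈ R, 0 ≤ coeff (R := ℚ) j (Br t) * coeff (R := ℚ) (n - j) (fullG t) := by
    intro j hj
    rw [hR, Finset.mem_filter] at hj
    exact mul_nonneg (coeff_Br_nonneg' ht hj.2) (g_nonneg t _)
  have himage : A.image (phi t) ⊆ R := by
    intro j' hj'
    rw [Finset.mem_image] at hj'
    obtain ⟨j, hj, rfl⟩ := hj'
    exact hφA j hj
  have step1 : ∑ j ∈ A, coeff (R := ℚ) (n - j) (fullG t)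
      ≤ ∑ j ∈ R, coeff (R := ℚ) j (Br t) * coeff (R := ℚ) (n - j) (fullG t) := by
    calc ∑ j ∈ A, coeff (R := ℚ) (n - j) (fullG t)
        ≤ ∑ j ∈ A, coeff (R := ℚ) (phi t j) (Br t) * coeff (R := ℚ) (n - phi t j) (fullG t) := by
          refine Finset.sum_le_sum fun j hj => ?_
          rw [hφBr j hj, one_mul]
          exact hφg j hj
      _ = ∑ j' ∈ A.image (phi t), coeff (R := ℚ) j' (Br t) * coeff (R := ℚ) (n - j') (fullG t) :=
          by rw [Finset.sum_image hinj]
      _ ≤ ∑ j ∈ R, coeff (R := ℚ) j (Br t) * coeff (R := ℚ) (n - j) (fullG t) :=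
          Finset.sum_le_sum_of_subset_of_nonneg himage (fun j hj _ => hRnn j hj)
  have hsplit := Finset.sum_filter_add_sum_filter_not (Finset.range (n + 1)) (negP t)
    (fun j => coeff (R := ℚ) j (Br t) * coeff (R := ℚ) (n - j) (fullG t))
  rw [← hsplit]
  rw [Finset.sum_congr rfl hAneg]
  have hns : ∑ j ∈ A, -coeff (R := ℚ) (n - j) (fullG t) = -∑ j ∈ A, coeff (R := ℚ) (n - j) (fullG t) := by
    simp
  rw [hns]
  linarith [step1]

end

end CoeffDAux

theorem coeff_D_nonneg (t n : ℕ) (ht : 2 ≤ t) (htn : (t, n) ≠ (2, 6)) :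
    0 ≤ PowerSeries.coeff (R := ℚ) n
      (qpoch t t * (qpoch 2 1)⁻¹ * ((X ^ 2 + X ^ 4) * (1 - X ^ 6)⁻¹)
        - qpoch t t * (qpoch 1 1)⁻¹
            * (X ^ (2 * t - 2) * (1 - X) * (1 - X ^ 3) * (1 - X ^ (2 * t))⁻¹)) := by
  have ht2 : ¬ (t = 2 ∧ n = 6) := fun ⟨h1, h2⟩ => htn (by rw [h1, h2])
  rw [CoeffDAux.D_eq t ht]
  exact CoeffDAux.coeff_mul_Br_nonneg t n ht ht2
end

section
/- Let t ≥ 4 be an integer and n ≥ 0. The cardinality of A_t(n) is at most the cardinality of S_t(n); equivalently, there is an injection from A_t(n) into S_t(n). -/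
open Finset
open scoped Classical

/-- `A_t(n)`: the `t`-regular partitions of `n` with no part equal to 3 and in which the
part 1 appears a number of times congruent to `-2 (mod 2t)`. -/
noncomputable def At (t n : ℕ) : Finset (Nat.Partition n) :=
  Finset.univ.filter fun p => (∀ x ∈ p.parts, ¬ t ∣ x) ∧ p.parts.count 3 = 0 ∧
    (p.parts.count 1 : ℤ) ≡ -2 [ZMOD (2 * t : ℕ)]

/-- `S_t(n)`: the `t`-regular partitions of `n` in which the part 1 appears a number of
times congruent to 2 or 4 modulo 6. -/
noncomputable def St (t n : ℕ) : Finset (Nat.Partition n) :=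
  Finset.univ.filter fun p => (∀ x ∈ p.parts, ¬ t ∣ x) ∧
    (p.parts.count 1 % 6 = 2 ∨ p.parts.count 1 % 6 = 4)

/-- The multiset-level map underlying the injection `A_t(n) → S_t(n)`. -/
noncomputable def Phi (s : Multiset ℕ) : Multiset ℕ :=
  if s.count 1 % 3 = 0 then
    s.filter (· ≠ 1) + Multiset.replicate (s.count 1 - 2) 1 + {2}
  else if s.count 1 % 3 = 2 then
    s.filter (· ≠ 1) + Multiset.replicate 2 1 + Multiset.replicate ((s.count 1 - 2) / 3) 3
  else
    s.filter (· ≠ 1) + Multiset.replicate 4 1 + Multiset.replicate ((s.count 1 - 4) / 3) 3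

lemma rest_count (s : Multiset ℕ) (k : ℕ) :
    (s.filter (· ≠ 1)).count k = if k = 1 then 0 else s.count k := by
  rw [Multiset.count_filter]
  split_ifs with h1 h2 h2 <;> simp_all

lemma rest_add (s : Multiset ℕ) :
    s.filter (· ≠ 1) + Multiset.replicate (s.count 1) 1 = s := by
  ext k
  rw [Multiset.count_add, rest_count, Multiset.count_replicate]
  split_ifs with h1 h2 <;> simp_all

lemma rest_sum (s : Multiset ℕ) : (s.filter (· ≠ 1)).sum + s.count 1 = s.sum := by
  conv_rhs => rw [← rest_add s]
  simp [Multiset.sum_replicate]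

lemma count_one_ge (t a : ℕ) (ht : 4 ≤ t) (h : (a : ℤ) ≡ -2 [ZMOD (2 * t : ℕ)]) :
    6 ≤ a ∧ a % 2 = 0 := by
  have hd : ((2 * t : ℕ) : ℤ) ∣ (-2 - a) := h.dvd
  have hd' : ((2 * t : ℕ) : ℤ) ∣ ((a : ℤ) + 2) := by
    have := dvd_neg.mpr hd
    simpa [neg_sub, sub_neg_eq_add] using this
  have hle : ((2 * t : ℕ) : ℤ) ≤ (a : ℤ) + 2 := Int.le_of_dvd (by positivity) hd'
  have h2 : (2 : ℤ) ∣ ((a : ℤ) + 2) := dvd_trans ⟨(t : ℤ), by push_cast; ring⟩ hd'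
  constructor
  · push_cast at hle; omega
  · omega

lemma Phi_counts (s : Multiset ℕ) (h3 : s.count 3 = 0) :
    (Phi s).count 1 =
      (if s.count 1 % 3 = 0 then s.count 1 - 2 else if s.count 1 % 3 = 2 then 2 else 4) ∧
    (Phi s).count 3 =
      (if s.count 1 % 3 = 0 then 0
       else if s.count 1 % 3 = 2 then (s.count 1 - 2) / 3 else (s.count 1 - 4) / 3) := by
  unfold Phi
  split_ifs with h0 h2 <;> constructor <;>
    simp [Multiset.count_add, Multiset.count_replicate, rest_count, h3]

lemma Phi_sum (s : Multiset ℕ) (h6 : 6 ≤ s.count 1) : (Phi s).sum = s.sum := by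
  have hr := rest_sum s
  unfold Phi
  split_ifs with h0 h2 <;>
  · simp only [Multiset.sum_add, Multiset.sum_replicate, smul_eq_mul,
      Multiset.sum_singleton]
    omega

lemma Phi_mem (s : Multiset ℕ) (x : ℕ) (hx : x ∈ Phi s) : x ∈ s ∨ x = 1 ∨ x = 2 ∨ x = 3 := by
  unfold Phi at hx
  split_ifs at hx <;>
  · simp only [Multiset.mem_add, Multiset.mem_filter, Multiset.mem_replicate,
      Multiset.mem_singleton] at hx
    tauto

lemma Phi_inj (s s' : Multiset ℕ) (h3 : s.count 3 = 0) (h3' : s'.count 3 = 0)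
    (h6 : 6 ≤ s.count 1) (h6' : 6 ≤ s'.count 1) (h : Phi s = Phi s') : s = s' := by
  obtain ⟨hc1, hc3⟩ := Phi_counts s h3
  obtain ⟨hc1', hc3'⟩ := Phi_counts s' h3'
  have e1 : (Phi s).count 1 = (Phi s').count 1 := by rw [h]
  have e3 : (Phi s).count 3 = (Phi s').count 3 := by rw [h]
  rw [hc1, hc1'] at e1
  rw [hc3, hc3'] at e3
  -- First conclude that the counts of 1 agree.
  have ha : s.count 1 = s'.count 1 := by
    split_ifs at e1 e3 <;> omega
  -- Now recover the rest of the partitions.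
  have hrest : s.filter (· ≠ 1) = s'.filter (· ≠ 1) := by
    unfold Phi at h
    rw [ha] at h
    split_ifs at h <;>
      exact add_right_cancel (add_right_cancel h)
  calc s = s.filter (· ≠ 1) + Multiset.replicate (s.count 1) 1 := (rest_add s).symm
    _ = s'.filter (· ≠ 1) + Multiset.replicate (s'.count 1) 1 := by rw [ha, hrest]
    _ = s' := rest_add s'

/-- The injection, as a (total) map on partitions. -/
noncomputable def fmap (n : ℕ) (p : Nat.Partition n) : Nat.Partition n :=
  if h : (Phi p.parts).sum = n ∧ ∀ x ∈ Phi p.parts, 0 < x then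
    ⟨Phi p.parts, fun hx => h.2 _ hx, h.1⟩ else p

theorem card_At_le_card_St (t n : ℕ) (ht : 4 ≤ t) :
    (At t n).card ≤ (St t n).card := by
  have key : ∀ p ∈ At t n, (fmap n p).parts = Phi p.parts ∧ fmap n p ∈ St t n := by
    intro p hp
    rw [At, Finset.mem_filter] at hp
    obtain ⟨-, hreg, h3, hmod⟩ := hp
    obtain ⟨h6, h2⟩ := count_one_ge t _ ht hmod
    have hcond : (Phi p.parts).sum = n ∧ ∀ x ∈ Phi p.parts, 0 < x := by
      refine ⟨by rw [Phi_sum _ h6, p.parts_sum], fun x hx => ?_⟩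
      rcases Phi_mem _ _ hx with h | h | h | h
      · exact p.parts_pos h
      all_goals omega
    have hparts : (fmap n p).parts = Phi p.parts := by
      rw [fmap, dif_pos hcond]
    refine ⟨hparts, ?_⟩
    rw [St, Finset.mem_filter]
    refine ⟨Finset.mem_univ _, ?_, ?_⟩
    · intro x hx hdvd
      rw [hparts] at hx
      rcases Phi_mem _ _ hx with h | h | h | h
      · exact hreg x h hdvd
      all_goals
        have := Nat.le_of_dvd (by omega) hdvd
        omega
    · rw [hparts]
      obtain ⟨hc1, -⟩ := Phi_counts p.parts h3
      rw [hc1]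
      split_ifs with h0 hr2 <;> omega
  apply Finset.card_le_card_of_injOn (fmap n)
  · exact fun p hp => (key p hp).2
  · intro p hp q hq heq
    rw [Finset.mem_coe] at hp hq
    have hP := (key p hp).1
    have hQ := (key q hq).1
    rw [At, Finset.mem_filter] at hp hq
    obtain ⟨-, -, hp3, hpmod⟩ := hp
    obtain ⟨-, -, hq3, hqmod⟩ := hq
    obtain ⟨hp6, -⟩ := count_one_ge t _ ht hpmod
    obtain ⟨hq6, -⟩ := count_one_ge t _ ht hqmod
    have : Phi p.parts = Phi q.parts := by rw [← hP, ← hQ, heq]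
    exact Nat.Partition.ext (Phi_inj _ _ hp3 hq3 hp6 hq6 this)
end

section
/- For every integer n ≥ 7, the number of partitions of n into odd parts in which the part 1 appears a number of times congruent to 6 modulo 12 is at most the number of partitions of n into odd parts in which the part 1 appears a number of times congruent to 4 modulo 12. -/
open Finset
open scoped Classical

namespace OddAux

def rM (M : ℕ) : Multiset ℕ := 1 ::ₘ 1 ::ₘ M ::ₘ 0

lemma three_le_of_odd_ne_one {a : ℕ} (h : Odd a) (h1 : a ≠ 1) : 3 ≤ a := by
  rcases h with ⟨k, rfl⟩; omega

lemma count_one_rM {M : ℕ} (hM3 : 3 ≤ M) : (rM M).count 1 = 2 := by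
  have : ¬ (1 = M) := by omega
  simp [rM, Multiset.count_cons, this]

lemma sum_rM (M : ℕ) : (rM M).sum = M + 2 := by
  simp [rM]; ring

lemma rM_le {n : ℕ} (p : Nat.Partition n) (M : ℕ) (hM : M ∈ p.parts) (hM3 : 3 ≤ M)
    (hc : 2 ≤ p.parts.count 1) : rM M ≤ p.parts := by
  rw [Multiset.le_iff_count]
  intro a
  have hMne : M ≠ 1 := by omega
  have hcM : 1 ≤ p.parts.count M := Multiset.count_pos.mpr hM
  by_cases ha1 : a = 1
  · subst ha1
    have : (rM M).count 1 = 2 := count_one_rM hM3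
    omega
  · by_cases haM : a = M
    · subst haM
      have : (rM a).count a = 1 := by
        have h1 : ¬ (a = 1) := ha1
        simp [rM, Multiset.count_cons, h1]
      omega
    · have : (rM M).count a = 0 := by
        simp [rM, Multiset.count_cons, ha1, haM]
      omega

def part1 {n : ℕ} (p : Nat.Partition n) (M : ℕ) (hM : M ∈ p.parts)
    (hM3 : 3 ≤ M) (hc : 2 ≤ p.parts.count 1) : Nat.Partition n where
  parts := (M + 2) ::ₘ (p.parts - rM M)
  parts_pos := by
    intro i hi
    rcases Multiset.mem_cons.mp hi with h | h
    · omega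
    · exact p.parts_pos (Multiset.mem_of_le (Multiset.sub_le_self _ _) h)
  parts_sum := by
    have hle := rM_le p M hM hM3 hc
    have h1 : (p.parts - rM M) + rM M = p.parts := tsub_add_cancel_of_le hle
    have h2 : (p.parts - rM M).sum + (rM M).sum = n := by
      rw [← Multiset.sum_add, h1, p.parts_sum]
    rw [Multiset.sum_cons]
    rw [sum_rM] at h2
    omega

def part2 (n : ℕ) (h14 : 14 ≤ n) : Nat.Partition n where
  parts := Multiset.replicate (n - 14) 1 + (7 ::ₘ 7 ::ₘ 0)
  parts_pos := by
    intro i hi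
    rcases Multiset.mem_add.mp hi with h | h
    · rw [Multiset.eq_of_mem_replicate h]; norm_num
    · rcases Multiset.mem_cons.mp h with h | h
      · omega
      · rcases Multiset.mem_cons.mp h with h | h
        · omega
        · simp at h
  parts_sum := by
    simp [Multiset.sum_replicate]
    omega

lemma parts_eq_replicate {n : ℕ} (p : Nat.Partition n) (h1 : ∀ a ∈ p.parts, a = 1) :
    p.parts = Multiset.replicate n 1 := by
  have h2 : p.parts = Multiset.replicate p.parts.card 1 :=
    (Multiset.eq_replicate_card).mpr h1
  have h3 : p.parts.card = n := by
    have := p.parts_sum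
    rw [h2] at this
    simpa using this
  rw [h2, h3]

lemma count_one_ge {c : ℕ} (h : c % 12 = 6) : 6 ≤ c := by
  have := Nat.mod_le c 12
  omega

lemma n_large {n : ℕ} (hn : 7 ≤ n) (p : Nat.Partition n)
    (h : p.parts.count 1 % 12 = 6) (h2 : ¬ ∃ a ∈ p.parts, a ≠ 1) :
    p.parts = Multiset.replicate n 1 ∧ 18 ≤ n ∧ n % 12 = 6 := by
  push_neg at h2
  have hrep := parts_eq_replicate p h2
  have hcnt : p.parts.count 1 = n := by
    rw [hrep]; simp
  rw [hcnt] at h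
  exact ⟨hrep, by omega, h⟩

noncomputable def oddmap (n : ℕ) (hn : 7 ≤ n) (p : Nat.Partition n) : Nat.Partition n :=
  if h : (∀ x ∈ p.parts, Odd x) ∧ p.parts.count 1 % 12 = 6 then
    if h2 : ∃ a ∈ p.parts, a ≠ 1 then
      part1 p (p.parts.toFinset.max' ⟨h2.choose, Multiset.mem_toFinset.mpr h2.choose_spec.1⟩)
        (Multiset.mem_toFinset.mp (Finset.max'_mem _ _))
        (le_trans (three_le_of_odd_ne_one (h.1 _ h2.choose_spec.1) h2.choose_spec.2)
          (Finset.le_max' _ _ (Multiset.mem_toFinset.mpr h2.choose_spec.1)))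
        (by have := count_one_ge h.2; omega)
    else part2 n (by obtain ⟨_, h18, _⟩ := n_large hn p h.2 h2; omega)
  else p

lemma partition_eq {n : ℕ} {p q : Nat.Partition n} (h : p.parts = q.parts) : p = q := by
  cases p; cases q; simpa using h

lemma oddmap_spec1 (n : ℕ) (hn : 7 ≤ n) (p : Nat.Partition n)
    (h : (∀ x ∈ p.parts, Odd x) ∧ p.parts.count 1 % 12 = 6)
    (h2 : ∃ a ∈ p.parts, a ≠ 1) :
    ∃ M, 3 ≤ M ∧ M ∈ p.parts ∧ (∀ x ∈ p.parts, x ≤ M) ∧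
      (oddmap n hn p).parts = (M + 2) ::ₘ (p.parts - rM M) := by
  rw [oddmap, dif_pos h, dif_pos h2]
  refine ⟨_, ?_, ?_, ?_, rfl⟩
  · exact le_trans (three_le_of_odd_ne_one (h.1 _ h2.choose_spec.1) h2.choose_spec.2)
      (Finset.le_max' _ _ (Multiset.mem_toFinset.mpr h2.choose_spec.1))
  · exact Multiset.mem_toFinset.mp (Finset.max'_mem _ _)
  · intro x hx; exact Finset.le_max' _ _ (Multiset.mem_toFinset.mpr hx)

lemma oddmap_spec2 (n : ℕ) (hn : 7 ≤ n) (p : Nat.Partition n)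
    (h : (∀ x ∈ p.parts, Odd x) ∧ p.parts.count 1 % 12 = 6)
    (h2 : ¬ ∃ a ∈ p.parts, a ≠ 1) :
    (oddmap n hn p).parts = Multiset.replicate (n - 14) 1 + (7 ::ₘ 7 ::ₘ 0) := by
  rw [oddmap, dif_pos h, dif_neg h2]; rfl

lemma count_max_image1 {n : ℕ} (p : Nat.Partition n) (M : ℕ)
    (hub : ∀ x ∈ p.parts, x ≤ M) :
    ((M + 2) ::ₘ (p.parts - rM M)).count (M + 2) = 1 := by
  have h0 : (M + 2) ∉ p.parts := fun hmem => by have := hub _ hmem; omega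
  have h1 : (p.parts - rM M).count (M + 2) = 0 := by
    have := Multiset.count_le_of_le (M + 2) (Multiset.sub_le_self p.parts (rM M))
    have h2 := Multiset.count_eq_zero_of_notMem h0
    omega
  rw [Multiset.count_cons_self, h1]

lemma not_mixed (n : ℕ) (hn : 7 ≤ n) (p p' : Nat.Partition n)
    (hp : (∀ x ∈ p.parts, Odd x) ∧ p.parts.count 1 % 12 = 6)
    (hp' : (∀ x ∈ p'.parts, Odd x) ∧ p'.parts.count 1 % 12 = 6)
    (h2 : ∃ a ∈ p.parts, a ≠ 1) (h2' : ¬ ∃ a ∈ p'.parts, a ≠ 1)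
    (heq : oddmap n hn p = oddmap n hn p') : False := by
  obtain ⟨M, hM3, hM, hub, hps⟩ := oddmap_spec1 n hn p hp h2
  have hps' := oddmap_spec2 n hn p' hp' h2'
  have ht : (M + 2) ::ₘ (p.parts - rM M)
      = Multiset.replicate (n - 14) 1 + (7 ::ₘ 7 ::ₘ 0) := by
    rw [← hps, ← hps', heq]
  have hmem : (M + 2) ∈ Multiset.replicate (n - 14) 1 + (7 ::ₘ 7 ::ₘ 0) := by
    rw [← ht]; exact Multiset.mem_cons_self _ _
  have hM7 : M + 2 = 7 := by
    rcases Multiset.mem_add.mp hmem with hx | hx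
    · have := Multiset.eq_of_mem_replicate hx; omega
    · simp at hx; omega
  have hc1 : ((M + 2) ::ₘ (p.parts - rM M)).count (M + 2) = 1 :=
    count_max_image1 p M hub
  have hc2 : (Multiset.replicate (n - 14) 1 + (7 ::ₘ 7 ::ₘ 0)).count 7 = 2 := by
    rw [Multiset.count_add, Multiset.count_replicate]
    simp
  rw [ht, hM7] at hc1
  omega

end OddAux

theorem odd_partitions_count_one_mod12 (n : ℕ) (hn : 7 ≤ n) :
    (Finset.univ.filter fun p : Nat.Partition n =>
        (∀ x ∈ p.parts, Odd x) ∧ p.parts.count 1 % 12 = 6).card ≤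
      (Finset.univ.filter fun p : Nat.Partition n =>
        (∀ x ∈ p.parts, Odd x) ∧ p.parts.count 1 % 12 = 4).card := by
  classical
  open OddAux in
  apply Finset.card_le_card_of_injOn (oddmap n hn)
  · intro p hp
    simp only [Finset.mem_coe, Finset.mem_filter, Finset.mem_univ, true_and] at hp ⊢
    by_cases h2 : ∃ a ∈ p.parts, a ≠ 1
    · obtain ⟨M, hM3, hM, hub, hparts⟩ := oddmap_spec1 n hn p hp h2
      constructor
      · intro x hx
        rw [hparts] at hx
        rcases Multiset.mem_cons.mp hx with rfl | hx
        · obtain ⟨k, hk⟩ := hp.1 M hM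
          exact ⟨k + 1, by omega⟩
        · exact hp.1 x (Multiset.mem_of_le (Multiset.sub_le_self _ _) hx)
      · rw [hparts]
        have h1 : ((M + 2) ::ₘ (p.parts - rM M)).count 1 = (p.parts - rM M).count 1 := by
          apply Multiset.count_cons_of_ne; omega
        rw [h1, Multiset.count_sub, count_one_rM hM3]
        have hge : 6 ≤ p.parts.count 1 := count_one_ge hp.2
        have := hp.2
        omega
    · obtain ⟨hrep, h18, hmod⟩ := n_large hn p hp.2 h2
      have hparts := oddmap_spec2 n hn p hp h2
      constructor
      · intro x hx
        rw [hparts] at hx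
        rcases Multiset.mem_add.mp hx with hx | hx
        · rw [Multiset.eq_of_mem_replicate hx]; exact odd_one
        · simp at hx
          rcases hx with rfl | rfl <;> exact ⟨3, rfl⟩
      · rw [hparts, Multiset.count_add, Multiset.count_replicate]
        have : (7 ::ₘ 7 ::ₘ (0 : Multiset ℕ)).count 1 = 0 := by simp
        rw [this]
        simp
        omega
  · intro p hp p' hp' heq
    simp only [Finset.coe_filter, Finset.mem_univ, true_and, Set.mem_setOf_eq] at hp hp'
    by_cases h2 : ∃ a ∈ p.parts, a ≠ 1 <;> by_cases h2' : ∃ a ∈ p'.parts, a ≠ 1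
    · obtain ⟨M, hM3, hM, hub, hps⟩ := oddmap_spec1 n hn p hp h2
      obtain ⟨M', hM3', hM', hub', hps'⟩ := oddmap_spec1 n hn p' hp' h2'
      have ht : (M + 2) ::ₘ (p.parts - rM M) = (M' + 2) ::ₘ (p'.parts - rM M') := by
        rw [← hps, ← hps', heq]
      have e1 : M + 2 ≤ M' + 2 := by
        have hmem : (M + 2) ∈ (M' + 2) ::ₘ (p'.parts - rM M') := by
          rw [← ht]; exact Multiset.mem_cons_self _ _
        rcases Multiset.mem_cons.mp hmem with h | h
        · omega
        · have := hub' _ (Multiset.mem_of_le (Multiset.sub_le_self _ _) h); omega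
      have e2 : M' + 2 ≤ M + 2 := by
        have hmem : (M' + 2) ∈ (M + 2) ::ₘ (p.parts - rM M) := by
          rw [ht]; exact Multiset.mem_cons_self _ _
        rcases Multiset.mem_cons.mp hmem with h | h
        · omega
        · have := hub _ (Multiset.mem_of_le (Multiset.sub_le_self _ _) h); omega
      have hMM : M = M' := by omega
      subst hMM
      have hsub : p.parts - rM M = p'.parts - rM M := by
        exact (Multiset.cons_inj_right (M + 2)).mp ht
      apply partition_eq
      have hle : rM M ≤ p.parts := rM_le p M hM hM3 (by have := count_one_ge hp.2; omega)
      have hle' : rM M ≤ p'.parts := rM_le p' M hM' hM3 (by have := count_one_ge hp'.2; omega)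
      calc p.parts = p.parts - rM M + rM M := (tsub_add_cancel_of_le hle).symm
        _ = p'.parts - rM M + rM M := by rw [hsub]
        _ = p'.parts := tsub_add_cancel_of_le hle'
    · exact absurd heq (fun h => not_mixed n hn p p' hp hp' h2 h2' h)
    · exact absurd heq.symm (fun h => not_mixed n hn p' p hp' hp h2' h2 h)
    · obtain ⟨hrep, _, _⟩ := n_large hn p hp.2 h2
      obtain ⟨hrep', _, _⟩ := n_large hn p' hp'.2 h2'
      exact partition_eq (by rw [hrep, hrep'])
end

section
/- Let t ≥ 2 and n ≥ 0 be integers with (t,n) ∉ {(2,5), (2,8), (2,11), (2,14)}. Then the coefficient of q^n in the formal power series F = ((q^t;q^t)_∞/(q;q)_∞) · q^{3t−3}(1+q^3)(1−q)(1−q^2)/(1−q^{3t}) is nonnegative. -/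
open Finset PowerSeries

lemma coeff_mul_eq_zero {u P : PowerSeries ℚ} {n : ℕ}
    (h : ∀ j ≤ n, (coeff (R := ℚ) j) u = 0) : (coeff (R := ℚ) n) (P * u) = 0 := by
  rw [PowerSeries.coeff_mul]
  apply Finset.sum_eq_zero
  rintro ⟨i, j⟩ hij
  rw [Finset.HasAntidiagonal.mem_antidiagonal] at hij
  rw [h j (by omega), mul_zero]

lemma coeff_mul_congr {f g : PowerSeries ℚ} {n : ℕ}
    (h : ∀ j ≤ n, (coeff (R := ℚ) j) f = (coeff (R := ℚ) j) g) (P : PowerSeries ℚ) :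
    (coeff (R := ℚ) n) (P * f) = (coeff (R := ℚ) n) (P * g) := by
  rw [PowerSeries.coeff_mul, PowerSeries.coeff_mul]
  apply Finset.sum_congr rfl
  rintro ⟨i, j⟩ hij
  rw [Finset.HasAntidiagonal.mem_antidiagonal] at hij
  rw [h j (by omega)]

/-- `u` has constant coefficient 1 and vanishing coefficients in degrees `1..n`. -/
def Hi (n : ℕ) (u : PowerSeries ℚ) : Prop :=
  constantCoeff (R := ℚ) u = 1 ∧ ∀ j, 1 ≤ j → j ≤ n → (coeff (R := ℚ) j) u = 0

lemma Hi.coeff_mul {n : ℕ} {P u : PowerSeries ℚ} (hu : Hi n u) :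
    (coeff (R := ℚ) n) (P * u) = (coeff (R := ℚ) n) P := by
  have h1 : P * u = P + P * (u - 1) := by ring
  rw [h1, map_add, coeff_mul_eq_zero (u := u - 1) ?_, add_zero]
  intro j hj
  rcases Nat.eq_zero_or_pos j with rfl | hj1
  · simp [hu.1]
  · rw [map_sub, hu.2 j hj1 hj, PowerSeries.coeff_one, if_neg (by omega), sub_zero]

lemma Hi.mul {n : ℕ} {u v : PowerSeries ℚ} (hu : Hi n u) (hv : Hi n v) : Hi n (u * v) := by
  refine ⟨by rw [map_mul, hu.1, hv.1, mul_one], fun j h1 hj => ?_⟩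
  rw [PowerSeries.coeff_mul]
  apply Finset.sum_eq_zero
  rintro ⟨a, b⟩ hab
  rw [Finset.HasAntidiagonal.mem_antidiagonal] at hab
  rcases Nat.eq_zero_or_pos a with rfl | ha
  · rw [hv.2 b (by omega) (by omega), mul_zero]
  · rw [hu.2 a ha (by omega), zero_mul]

lemma Hi.inv {n : ℕ} {u : PowerSeries ℚ} (hu : Hi n u) : Hi n u⁻¹ := by
  have hc : constantCoeff (R := ℚ) u ≠ 0 := by rw [hu.1]; exact one_ne_zero
  refine ⟨by rw [PowerSeries.constantCoeff_inv, hu.1, inv_one], fun j h1 hj => ?_⟩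
  have h2 : (coeff (R := ℚ) j) (u * u⁻¹) = (coeff (R := ℚ) j) 1 := by
    rw [PowerSeries.mul_inv_cancel u hc]
  rw [PowerSeries.coeff_mul] at h2
  have h3 : ∑ p ∈ antidiagonal j, (coeff (R := ℚ) p.1) u * (coeff (R := ℚ) p.2) u⁻¹
      = (coeff (R := ℚ) j) u⁻¹ := by
    rw [Finset.sum_eq_single_of_mem (0, j) (by simp)]
    · simp only [coeff_zero_eq_constantCoeff, hu.1, one_mul]
    · rintro ⟨a, b⟩ hab hne
      rw [Finset.HasAntidiagonal.mem_antidiagonal] at hab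
      have ha : 1 ≤ a := by
        rcases Nat.eq_zero_or_pos a with rfl | h
        · exact absurd (by omega : b = j) (by simpa using hne)
        · exact h
      rw [hu.2 a ha (by omega), zero_mul]
  rw [h3] at h2
  rw [h2, PowerSeries.coeff_one, if_neg (by omega)]

lemma hi_one {n : ℕ} : Hi n (1 : PowerSeries ℚ) :=
  ⟨by simp, fun j h1 _ => by rw [PowerSeries.coeff_one, if_neg (by omega)]⟩

lemma hi_one_sub {n e : ℕ} (he : n < e) : Hi n (1 - X ^ e : PowerSeries ℚ) := by
  constructor
  · rw [map_sub, map_one, ← coeff_zero_eq_constantCoeff, PowerSeries.coeff_X_pow,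
      if_neg (by omega), sub_zero]
  · intro j h1 hj
    rw [map_sub, PowerSeries.coeff_one, PowerSeries.coeff_X_pow,
      if_neg (by omega), if_neg (by omega), sub_zero]

lemma hi_prod {n : ℕ} {s : Finset ℕ} {e : ℕ → ℕ} (he : ∀ i ∈ s, n < e i) :
    Hi n (∏ i ∈ s, (1 - X ^ e i : PowerSeries ℚ)) :=
  Finset.prod_induction _ _ (fun _ _ ha hb => ha.mul hb) hi_one
    (fun i hi => hi_one_sub (he i hi))

lemma constantCoeff_qpoch {a d : ℕ} (ha : 1 ≤ a) :
    constantCoeff (R := ℚ) (qpoch a d) = 1 := by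
  rw [← coeff_zero_eq_constantCoeff, qpoch, coeff_mk, Finset.prod_range_one,
    map_sub, PowerSeries.coeff_one, PowerSeries.coeff_X_pow, if_pos rfl,
    if_neg (by omega), sub_zero]

lemma hi_qpoch {n a d : ℕ} (ha : n < a) : Hi n (qpoch a d) := by
  refine ⟨constantCoeff_qpoch (by omega), fun j h1 hj => ?_⟩
  rw [qpoch, coeff_mk]
  exact (hi_prod (fun i _ => by omega)).2 j h1 hj

lemma coeff_prod_range {a d : ℕ} (ha : 1 ≤ a) (hd : 1 ≤ d) (n : ℕ) :
    ∀ m, n < m → (coeff (R := ℚ) n) (∏ i ∈ range m, (1 - X ^ (a + d * i) : PowerSeries ℚ))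
      = (coeff (R := ℚ) n) (qpoch a d) := by
  intro m hm
  induction m with
  | zero => omega
  | succ m ih =>
    rcases Nat.lt_or_ge n m with h | h
    · rw [Finset.prod_range_succ]
      have hdm : m ≤ d * m := Nat.le_mul_of_pos_left m (by omega)
      rw [Hi.coeff_mul (hi_one_sub (by omega)), ih h]
    · have : m = n := by omega
      subst this
      rw [qpoch, coeff_mk]

lemma qpoch_step {b d : ℕ} (hb : 1 ≤ b) (hd : 1 ≤ d) :
    qpoch b d = (1 - X ^ b) * qpoch (b + d) d := by
  ext n
  have L := coeff_prod_range hb hd n (n + 2) (by omega)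
  have hprod : (∏ i ∈ range (n + 1), (1 - X ^ (b + d * (i + 1)) : PowerSeries ℚ))
      = ∏ i ∈ range (n + 1), (1 - X ^ ((b + d) + d * i) : PowerSeries ℚ) :=
    Finset.prod_congr rfl fun i _ => by rw [show b + d * (i + 1) = (b + d) + d * i by ring]
  calc (coeff (R := ℚ) n) (qpoch b d)
      = (coeff (R := ℚ) n) (∏ i ∈ range (n + 2), (1 - X ^ (b + d * i) : PowerSeries ℚ)) := L.symm
    _ = (coeff (R := ℚ) n) ((1 - X ^ b) * ∏ i ∈ range (n + 1), (1 - X ^ ((b + d) + d * i) : PowerSeries ℚ)) := by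
        rw [Finset.prod_range_succ', hprod]
        rw [show b + d * 0 = b by ring, mul_comm]
    _ = (coeff (R := ℚ) n) ((1 - X ^ b) * qpoch (b + d) d) :=
        coeff_mul_congr (fun j hj => coeff_prod_range (by omega) hd j (n + 1) (by omega)) _

lemma qpoch_split {a d : ℕ} (ha : 1 ≤ a) (hd : 1 ≤ d) (m : ℕ) :
    qpoch a d = (∏ i ∈ range m, (1 - X ^ (a + d * i) : PowerSeries ℚ)) * qpoch (a + d * m) d := by
  induction m with
  | zero => simp
  | succ m ih =>
    rw [Finset.prod_range_succ, show a + d * (m + 1) = (a + d * m) + d by ring, ih,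
      qpoch_step (b := a + d * m) (by omega) hd]
    ring


noncomputable def geom (k : ℕ) : PowerSeries ℚ :=
  PowerSeries.mk fun n => if k ∣ n then 1 else 0

lemma one_sub_mul_geom {k : ℕ} (hk : 1 ≤ k) : (1 - X ^ k) * geom k = 1 := by
  ext n
  have hiff : k ≤ n → (k ∣ n ↔ k ∣ n - k) := by
    intro h
    constructor
    · intro h'; exact Nat.dvd_sub h' dvd_rfl
    · intro h'
      have h2 := Nat.dvd_add h' (dvd_refl k)
      rwa [Nat.sub_add_cancel h] at h2
  have hnd : ¬k ≤ n → n ≠ 0 → ¬k ∣ n := fun h1 h2 hd => by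
    have := Nat.eq_zero_of_dvd_of_lt hd (by omega); omega
  rw [sub_mul, one_mul, map_sub, mul_comm (X ^ k : PowerSeries ℚ) (geom k),
    PowerSeries.coeff_mul_X_pow']
  simp only [geom, coeff_mk, PowerSeries.coeff_one]
  split_ifs with h1 h2 h3 h4 h5 h6 h7 h8 <;> try norm_num
  all_goals first
    | omega
    | (exact absurd ((hiff (by assumption)).mp (by assumption)) (by assumption))
    | (exact absurd ((hiff (by assumption)).mpr (by assumption)) (by assumption))
    | (exact absurd (by assumption : k ∣ n) (hnd (by assumption) (by omega)))
    | (exact absurd (show k ∣ n by subst_vars; exact dvd_zero k) (by assumption))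

def NN (f : PowerSeries ℚ) : Prop := ∀ j, 0 ≤ (coeff (R := ℚ) j) f

lemma NN.mul {f g : PowerSeries ℚ} (hf : NN f) (hg : NN g) : NN (f * g) := by
  intro j
  rw [PowerSeries.coeff_mul]
  exact Finset.sum_nonneg fun p _ => mul_nonneg (hf p.1) (hg p.2)

lemma nn_one : NN 1 := fun j => by rw [PowerSeries.coeff_one]; split <;> norm_num

lemma nn_geom (k : ℕ) : NN (geom k) := fun j => by rw [geom, coeff_mk]; split <;> norm_num

lemma nn_prod {s : Finset ℕ} {f : ℕ → PowerSeries ℚ} (h : ∀ i ∈ s, NN (f i)) :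
    NN (∏ i ∈ s, f i) :=
  Finset.prod_induction _ _ (fun _ _ ha hb => ha.mul hb) nn_one h

lemma coeff_prod_geom (s : Finset ℕ) (b : ℕ) :
    (coeff (R := ℚ) b) (∏ k ∈ s, geom k)
      = ((finsuppAntidiag s b).filter fun l => ∀ k ∈ s, k ∣ l k).card := by
  rw [PowerSeries.coeff_prod,
    Finset.sum_congr rfl (fun l _ => show _ = if (∀ k ∈ s, k ∣ l k) then (1:ℚ) else 0 by
      simp only [geom, coeff_mk]
      exact Finset.prod_boole),
    Finset.sum_boole]

/-- odd numbers in `[3, N]` -/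
def Od (N : ℕ) : Finset ℕ := (Icc 3 N).filter fun k => k % 2 = 1

lemma mem_Od {N k : ℕ} : k ∈ Od N ↔ 3 ≤ k ∧ k ≤ N ∧ k % 2 = 1 := by
  simp only [Od, mem_filter, mem_Icc]
  tauto

/-- partitions of `b` into odd parts in `[3,N]`, as finsupps -/
noncomputable def PF (N b : ℕ) : Finset (ℕ →₀ ℕ) :=
  (finsuppAntidiag (Od N) b).filter fun l => ∀ k ∈ Od N, k ∣ l k

lemma mem_PF {N b : ℕ} {l : ℕ →₀ ℕ} :
    l ∈ PF N b ↔ ((∑ k ∈ Od N, l k) = b ∧ l.support ⊆ Od N) ∧ ∀ k ∈ Od N, k ∣ l k := by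
  simp only [PF, mem_filter, mem_finsuppAntidiag]

def Mx (l : ℕ →₀ ℕ) : ℕ := l.support.sup id

lemma Mx_mem {l : ℕ →₀ ℕ} (h : l.support.Nonempty) : Mx l ∈ l.support := by
  obtain ⟨c, hc, he⟩ := Finset.exists_mem_eq_sup l.support h id
  rw [Mx, he]; exact hc

lemma le_Mx {l : ℕ →₀ ℕ} {x : ℕ} (hx : x ∈ l.support) : x ≤ Mx l :=
  Finset.le_sup (f := id) hx

noncomputable def bump (M : ℕ) (l : ℕ →₀ ℕ) : ℕ →₀ ℕ :=
  (l.update M (l M - M)).update (M + 2) (M + 2)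

lemma bump_apply (M : ℕ) (l : ℕ →₀ ℕ) (x : ℕ) :
    bump M l x = if x = M + 2 then M + 2 else if x = M then l M - M else l x := by
  simp [bump, Finsupp.coe_update, Function.update_apply]

noncomputable def restore (m : ℕ →₀ ℕ) : ℕ →₀ ℕ :=
  (m.update (Mx m) 0).update (Mx m - 2) (m (Mx m - 2) + (Mx m - 2))

lemma restore_apply (m : ℕ →₀ ℕ) (x : ℕ) :
    restore m x = if x = Mx m - 2 then m (Mx m - 2) + (Mx m - 2)
      else if x = Mx m then 0 else m x := by
  simp [restore, Finsupp.coe_update, Function.update_apply]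
lemma bump_mem_and_facts {N b : ℕ} {l : ℕ →₀ ℕ} (hb1 : 1 ≤ b) (hbN : b + 2 ≤ N)
    (hl : l ∈ PF N b) :
    bump (Mx l) l ∈ PF N (b + 2) ∧ Mx (bump (Mx l) l) = Mx l + 2 ∧
      restore (bump (Mx l) l) = l ∧ 3 ≤ Mx l := by
  obtain ⟨⟨hsum, hsupp⟩, hdvd⟩ := mem_PF.mp hl
  have hne : l.support.Nonempty := by
    rcases Finset.eq_empty_or_nonempty l.support with he | h
    · exfalso
      have hl0 : l = 0 := Finsupp.support_eq_empty.mp he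
      rw [hl0] at hsum
      simp at hsum
      omega
    · exact h
  set M := Mx l with hMdef
  have hMsup : M ∈ l.support := Mx_mem hne
  have hMO : M ∈ Od N := hsupp hMsup
  obtain ⟨hM3, hMN, hModd⟩ := mem_Od.mp hMO
  have hlM0 : l M ≠ 0 := Finsupp.mem_support_iff.mp hMsup
  have hdM : M ∣ l M := hdvd M hMO
  have hMle : M ≤ l M := Nat.le_of_dvd (by omega) hdM
  have hlMb : l M ≤ b := by
    rw [← hsum]
    exact Finset.single_le_sum (f := fun k => l k) (fun i _ => Nat.zero_le _) hMO
  have hM2O : M + 2 ∈ Od N := mem_Od.mpr ⟨by omega, by omega, by omega⟩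
  have hlM2 : l (M + 2) = 0 := by
    by_contra h
    have := le_Mx (Finsupp.mem_support_iff.mpr h)
    omega
  have hMne : M ≠ M + 2 := by omega
  have hsupb : (bump M l).support ⊆ insert (M + 2) l.support := by
    intro x hx
    rw [Finsupp.mem_support_iff, bump_apply] at hx
    by_cases h2 : x = M + 2
    · exact h2 ▸ Finset.mem_insert_self _ _
    · rw [if_neg h2] at hx
      apply Finset.mem_insert_of_mem
      rw [Finsupp.mem_support_iff]
      by_cases h3 : x = M
      · rw [if_pos h3] at hx
        rw [h3]
        omega
      · rwa [if_neg h3] at hx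
  have key : ∀ (s : Finset ℕ) (f : ℕ → ℕ) (i : ℕ), i ∈ s → ∀ v : ℕ,
      ∑ x ∈ s, Function.update f i v x = v + ∑ x ∈ s.erase i, f x := by
    intro s f i hi v
    rw [Finset.sum_update_of_mem hi, Finset.erase_eq]
  have hcoe : ∀ x, bump M l x
      = Function.update (Function.update (⇑l) M (l M - M)) (M + 2) (M + 2) x := by
    intro x
    rw [bump_apply]
    simp [Function.update_apply]
  have hMO' : M ∈ (Od N).erase (M + 2) := Finset.mem_erase.mpr ⟨hMne, hMO⟩
  have hs1 : ∑ x ∈ Od N, bump M l x = (M + 2) + ∑ x ∈ (Od N).erase (M + 2),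
      Function.update (⇑l) M (l M - M) x := by
    rw [Finset.sum_congr rfl (fun x _ => hcoe x)]
    exact key _ _ _ hM2O _
  have hs2 : ∑ x ∈ (Od N).erase (M + 2), Function.update (⇑l) M (l M - M) x
      = (l M - M) + ∑ x ∈ ((Od N).erase (M + 2)).erase M, l x := key _ _ _ hMO' _
  have ht1 : ∑ x ∈ Od N, l x = l (M + 2) + ∑ x ∈ (Od N).erase (M + 2), l x :=
    (Finset.add_sum_erase _ _ hM2O).symm
  have ht2 : ∑ x ∈ (Od N).erase (M + 2), l x
      = l M + ∑ x ∈ ((Od N).erase (M + 2)).erase M, l x :=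
    (Finset.add_sum_erase _ _ hMO').symm
  have hsumb : ∑ x ∈ Od N, bump M l x = b + 2 := by omega
  have hdvdb : ∀ k ∈ Od N, k ∣ bump M l k := by
    intro k hk
    rw [bump_apply]
    by_cases h2 : k = M + 2
    · rw [if_pos h2]
      exact h2 ▸ dvd_refl _
    · rw [if_neg h2]
      by_cases h3 : k = M
      · rw [if_pos h3, h3]
        exact Nat.dvd_sub hdM dvd_rfl
      · rw [if_neg h3]
        exact hdvd k hk
  have hmem : bump M l ∈ PF N (b + 2) :=
    mem_PF.mpr ⟨⟨hsumb, hsupb.trans (Finset.insert_subset hM2O hsupp)⟩, hdvdb⟩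
  have hbM2 : (bump M l) (M + 2) = M + 2 := by rw [bump_apply, if_pos rfl]
  have hMxb : Mx (bump M l) = M + 2 := by
    apply le_antisymm
    · apply Finset.sup_le
      intro x hx
      rcases Finset.mem_insert.mp (hsupb hx) with h | h
      · exact h ▸ le_refl _
      · have := le_Mx h
        simp only [id]
        omega
    · exact Finset.le_sup (f := id) (Finsupp.mem_support_iff.mpr (by rw [hbM2]; omega))
  have hres : restore (bump M l) = l := by
    ext x
    rw [restore_apply, hMxb, show M + 2 - 2 = M by omega]
    have hbMM : (bump M l) M = l M - M := by
      rw [bump_apply, if_neg hMne, if_pos rfl]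
    by_cases h1 : x = M
    · rw [if_pos h1, hbMM, h1]
      omega
    · rw [if_neg h1]
      by_cases h2 : x = M + 2
      · rw [if_pos h2, h2, hlM2]
      · rw [if_neg h2, bump_apply, if_neg h2, if_neg h1]
  exact ⟨hmem, hMxb, hres, hM3⟩

lemma bump_injOn {N b : ℕ} (hb1 : 1 ≤ b) (hbN : b + 2 ≤ N) :
    Set.InjOn (fun l => bump (Mx l) l) (PF N b) := by
  intro l1 h1 l2 h2 heq
  have r1 := (bump_mem_and_facts hb1 hbN h1).2.2.1
  have r2 := (bump_mem_and_facts hb1 hbN h2).2.2.1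
  simp only at heq
  rw [← r1, ← r2, heq]

lemma card_PF_le {N b : ℕ} (hb1 : 1 ≤ b) (hbN : b + 2 ≤ N) :
    (PF N b).card ≤ (PF N (b + 2)).card := by
  apply Finset.card_le_card_of_injOn (fun l => bump (Mx l) l)
  · intro l hl
    exact (bump_mem_and_facts hb1 hbN hl).1
  · exact bump_injOn hb1 hbN

lemma single_mem_PF14 {N : ℕ} (hN : 16 ≤ N) : Finsupp.single 7 14 ∈ PF N 14 := by
  rw [mem_PF]
  have h7 : (7 : ℕ) ∈ Od N := mem_Od.mpr ⟨by omega, by omega, by omega⟩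
  refine ⟨⟨?_, ?_⟩, ?_⟩
  · rw [Finset.sum_congr rfl (fun k _ => Finsupp.single_apply),
      Finset.sum_ite_eq (Od N) 7 (fun _ => 14), if_pos h7]
  · intro x hx
    rw [Finsupp.mem_support_iff, Finsupp.single_apply] at hx
    have hx7 : x = 7 := by
      by_contra h
      rw [if_neg (fun he => h he.symm)] at hx
      omega
    exact hx7 ▸ h7
  · intro k hk
    rw [Finsupp.single_apply]
    split_ifs with h
    · exact h ▸ (by norm_num : (7 : ℕ) ∣ 14)
    · exact dvd_zero k

lemma card_PF_lt {N : ℕ} (hN : 16 ≤ N) : (PF N 12).card + 1 ≤ (PF N 14).card := by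
  have hmem := single_mem_PF14 hN
  have hinj : (PF N 12).card ≤ ((PF N 14).erase (Finsupp.single 7 14)).card := by
    apply Finset.card_le_card_of_injOn (fun l => bump (Mx l) l)
    · intro l hl
      have hf := bump_mem_and_facts (by omega : 1 ≤ 12) (by omega : 12 + 2 ≤ N) hl
      refine Finset.mem_erase.mpr ⟨?_, hf.1⟩
      intro hcontra
      simp only at hcontra
      have hMxb := hf.2.1
      have hM3 := hf.2.2.2
      have h7 : Mx (Finsupp.single 7 14) = 7 := by
        rw [Mx, Finsupp.support_single_ne_zero 7 (by norm_num)]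
        simp
      rw [hcontra, h7] at hMxb
      have hv : (bump (Mx l) l) (Mx l + 2) = Mx l + 2 := by rw [bump_apply, if_pos rfl]
      rw [hcontra, Finsupp.single_apply, if_pos (by omega)] at hv
      omega
    · exact bump_injOn (by omega) (by omega)
  have hcard := Finset.card_erase_of_mem hmem
  have hpos : 1 ≤ (PF N 14).card := Finset.card_pos.mpr ⟨_, hmem⟩
  omega
lemma coeff_one_sub_sq (f : PowerSeries ℚ) (b : ℕ) :
    (coeff (R := ℚ) b) ((1 - X ^ 2) * f)
      = (coeff (R := ℚ) b) f - (if 2 ≤ b then (coeff (R := ℚ) (b - 2)) f else 0) := by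
  rw [sub_mul, one_mul, map_sub, mul_comm (X ^ 2 : PowerSeries ℚ) f,
    PowerSeries.coeff_mul_X_pow']

lemma coeff_WO (N b : ℕ) : (coeff (R := ℚ) b) (∏ k ∈ Od N, geom k) = ((PF N b).card : ℚ) :=
  coeff_prod_geom _ _

lemma hi_geom {n k : ℕ} (h : n < k) : Hi n (geom k) := by
  constructor
  · rw [← coeff_zero_eq_constantCoeff, geom, coeff_mk, if_pos (dvd_zero k)]
  · intro j h1 hj
    rw [geom, coeff_mk, if_neg (fun hd => by have := Nat.le_of_dvd (by omega) hd; omega)]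

lemma ne_zero_of_cc_one {f : PowerSeries ℚ} (h : constantCoeff (R := ℚ) f = 1) : f ≠ 0 := by
  intro h0
  rw [h0, map_zero] at h
  norm_num at h

lemma cc_one_sub_pow {k : ℕ} (hk : 1 ≤ k) :
    constantCoeff (R := ℚ) (1 - X ^ k) = 1 := by
  rw [map_sub, map_one, ← coeff_zero_eq_constantCoeff, PowerSeries.coeff_X_pow,
    if_neg (by omega), sub_zero]

lemma cc_prod_one_sub {s : Finset ℕ} (h : ∀ k ∈ s, 1 ≤ k) :
    constantCoeff (R := ℚ) (∏ k ∈ s, (1 - X ^ k)) = 1 := by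
  rw [map_prod, Finset.prod_congr rfl (fun k hk => cc_one_sub_pow (h k hk)),
    Finset.prod_const_one]

lemma D_nonneg {N b : ℕ} (hbN : b + 2 ≤ N) (hb2 : b ≠ 2) :
    0 ≤ (coeff (R := ℚ) b) ((1 - X ^ 2) * ∏ k ∈ Od N, geom k) := by
  rw [coeff_one_sub_sq]
  by_cases h2 : 2 ≤ b
  · rw [if_pos h2, coeff_WO, coeff_WO]
    have hle := card_PF_le (N := N) (b := b - 2) (by omega) (by omega)
    rw [show b - 2 + 2 = b by omega] at hle
    have : ((PF N (b - 2)).card : ℚ) ≤ ((PF N b).card : ℚ) := by exact_mod_cast hle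
    linarith
  · rw [if_neg h2, sub_zero, coeff_WO]
    positivity

lemma D_two {N : ℕ} : -1 ≤ (coeff (R := ℚ) 2) ((1 - X ^ 2) * ∏ k ∈ Od N, geom k) := by
  rw [coeff_one_sub_sq, if_pos (by omega), coeff_WO, coeff_WO]
  have h0 : (PF N (2 - 2)).card ≤ 1 := by
    have : PF N 0 ⊆ finsuppAntidiag (Od N) 0 := Finset.filter_subset _ _
    have h1 := Finset.card_le_card this
    rw [finsuppAntidiag_zero] at h1
    simpa using h1
  have h2 : (0 : ℚ) ≤ ((PF N 2).card : ℚ) := by positivity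
  have h3 : ((PF N (2 - 2)).card : ℚ) ≤ 1 := by exact_mod_cast h0
  linarith

lemma D_fourteen {N : ℕ} (hN : 16 ≤ N) :
    1 ≤ (coeff (R := ℚ) 14) ((1 - X ^ 2) * ∏ k ∈ Od N, geom k) := by
  rw [coeff_one_sub_sq, if_pos (by omega), coeff_WO, coeff_WO]
  have := card_PF_lt hN
  have hc : ((PF N 12).card : ℚ) + 1 ≤ ((PF N 14).card : ℚ) := by exact_mod_cast this
  norm_num
  linarith

lemma geom36 : ((X ^ 3 + X ^ 6) * geom 6 : PowerSeries ℚ) = geom 3 * X ^ 3 := by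
  have h6 : ((1 : PowerSeries ℚ) - X ^ 6) ≠ 0 := ne_zero_of_cc_one (cc_one_sub_pow (by omega))
  apply mul_right_cancel₀ h6
  have h33 : ((X : PowerSeries ℚ) ^ 3) * X ^ 3 = X ^ 6 := by
    rw [← pow_add]
  have hfact : ((1 : PowerSeries ℚ) - X ^ 6) = (1 - X ^ 3) * (1 + X ^ 3) := by
    rw [← h33]; ring
  calc (X ^ 3 + X ^ 6) * geom 6 * (1 - X ^ 6)
      = (X ^ 3 + X ^ 6) * ((1 - X ^ 6) * geom 6) := by ring
    _ = X ^ 3 + X ^ 6 := by rw [one_sub_mul_geom (by omega)]; ring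
    _ = ((1 - X ^ 3) * geom 3) * (X ^ 3 * (1 + X ^ 3)) := by
        rw [one_sub_mul_geom (by omega), one_mul, mul_add, mul_one, h33]
    _ = geom 3 * X ^ 3 * (1 - X ^ 6) := by rw [hfact]; ring
set_option maxHeartbeats 1000000 in
theorem coeff_F_nonneg (t n : ℕ) (ht : 2 ≤ t)
    (htn : (t, n) ∉ ({(2, 5), (2, 8), (2, 11), (2, 14)} : Set (ℕ × ℕ))) :
    0 ≤ PowerSeries.coeff (R := ℚ) n
      (qpoch t t * (qpoch 1 1)⁻¹
        * (X ^ (3 * t - 3) * (1 + X ^ 3) * (1 - X) * (1 - X ^ 2) * (1 - X ^ (3 * t))⁻¹)) := by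
  have ht1 : 1 ≤ t := by omega
  set K := n + 4 with hK
  set L := t * K + 2 with hL
  have hKt : K ≤ t * K := Nat.le_mul_of_pos_left K (by omega)
  have hinj : ∀ a d : ℕ, 1 ≤ d → ∀ m : ℕ,
      (∏ k ∈ (range m).image (fun i => a + d * i), (1 - X ^ k : PowerSeries ℚ))
        = ∏ i ∈ range m, (1 - X ^ (a + d * i) : PowerSeries ℚ) := by
    intro a d hd m
    apply Finset.prod_image
    intro i _ j _ hij
    have hd2 : d * i = d * j := by simp only at hij; omega
    exact Nat.eq_of_mul_eq_mul_left (by omega) hd2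
  set A : Finset ℕ := (range K).image (fun i => t + t * i) with hA
  set B : Finset ℕ := (range L).image (fun i => 1 + 1 * i) with hB
  have memA : ∀ k, k ∈ A ↔ ∃ i, i < K ∧ k = t + t * i := by
    intro k
    simp only [hA, mem_image, mem_range]
    constructor
    · rintro ⟨i, hi, rfl⟩; exact ⟨i, hi, rfl⟩
    · rintro ⟨i, hi, rfl⟩; exact ⟨i, hi, rfl⟩
  have memB : ∀ k, k ∈ B ↔ 1 ≤ k ∧ k ≤ L := by
    intro k
    simp only [hB, mem_image, mem_range]
    constructor
    · rintro ⟨i, hi, rfl⟩; omega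
    · rintro ⟨h1, h2⟩; exact ⟨k - 1, by omega, by omega⟩
  set PA := ∏ k ∈ A, (1 - X ^ k : PowerSeries ℚ) with hPAdef
  set PB := ∏ k ∈ B, (1 - X ^ k : PowerSeries ℚ) with hPBdef
  set T1 := qpoch (t + t * K) t with hT1def
  set T2 := qpoch (1 + 1 * L) 1 with hT2def
  have hq1 : qpoch t t = PA * T1 := by
    rw [hPAdef, hinj t t ht1 K, hT1def]
    exact qpoch_split ht1 ht1 K
  have hq2 : qpoch 1 1 = PB * T2 := by
    rw [hPBdef, hinj 1 1 le_rfl L, hT2def]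
    exact qpoch_split le_rfl le_rfl L
  have hHiT1 : Hi n T1 := hi_qpoch (by omega)
  have hHiT2 : Hi n T2 := hi_qpoch (by omega)
  have hHiU : Hi n (T1 * T2⁻¹) := hHiT1.mul hHiT2.inv
  have e0 : qpoch t t * (qpoch 1 1)⁻¹
        * (X ^ (3 * t - 3) * (1 + X ^ 3) * (1 - X) * (1 - X ^ 2) * (1 - X ^ (3 * t))⁻¹)
      = (PA * PB⁻¹ * (X ^ (3 * t - 3) * (1 + X ^ 3) * (1 - X) * (1 - X ^ 2)
          * (1 - X ^ (3 * t))⁻¹)) * (T1 * T2⁻¹) := by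
    rw [hq1, hq2, PowerSeries.mul_inv_rev]
    ring
  rw [e0, Hi.coeff_mul hHiU]
  have hBone : ∀ k ∈ B, 1 ≤ k := fun k hk => ((memB k).mp hk).1
  have hccPB : constantCoeff (R := ℚ) PB = 1 := cc_prod_one_sub hBone
  have h3tA : 3 * t ∈ A := (memA _).mpr ⟨2, by omega, by omega⟩
  have h1B : 1 ∈ B := (memB 1).mpr ⟨le_rfl, by omega⟩
  have h2B : 2 ∈ B.erase 1 :=
    Finset.mem_erase.mpr ⟨by omega, (memB 2).mpr ⟨by omega, by omega⟩⟩
  have hpow : (X : PowerSeries ℚ) ^ (3 * t - 3) * (1 + X ^ 3)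
      = X ^ (3 * t - 3) + X ^ (3 * t) := by
    rw [mul_add, mul_one, ← pow_add, show 3 * t - 3 + 3 = 3 * t by omega]
  have hi3t : ((1 : PowerSeries ℚ) - X ^ (3 * t))⁻¹ * (1 - X ^ (3 * t)) = 1 :=
    PowerSeries.inv_mul_cancel _ (by rw [cc_one_sub_pow (by omega)]; norm_num)
  have hiPB : PB⁻¹ * PB = 1 :=
    PowerSeries.inv_mul_cancel _ (by rw [hccPB]; norm_num)
  rcases Nat.lt_or_ge t 3 with ht2 | ht3
  · -- t = 2
    have ht2' : t = 2 := by omega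
    subst ht2'
    set A' := A.erase (3 * 2) with hA'def
    set A'' := A'.erase 2 with hA''def
    set B'' := (B.erase 1).erase 2 with hB''def
    have h2A : 2 ∈ A' :=
      Finset.mem_erase.mpr ⟨by omega, (memA 2).mpr ⟨0, by omega, by omega⟩⟩
    have hsub : A'' ⊆ B'' := by
      intro k hk
      obtain ⟨hne2, hk1⟩ := Finset.mem_erase.mp hk
      obtain ⟨hne6, hkA⟩ := Finset.mem_erase.mp hk1
      obtain ⟨i, hi, rfl⟩ := (memA _).mp hkA
      refine Finset.mem_erase.mpr ⟨hne2,
        Finset.mem_erase.mpr ⟨by omega, (memB _).mpr ⟨by omega, by omega⟩⟩⟩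
    set C := B'' \ A'' with hCdef
    set PA'' := ∏ k ∈ A'', (1 - X ^ k : PowerSeries ℚ) with hPA''def
    set PC := ∏ k ∈ C, (1 - X ^ k : PowerSeries ℚ) with hPCdef
    set GC := ∏ k ∈ C, geom k with hGCdef
    have hCone : ∀ k ∈ C, 1 ≤ k := fun k hk =>
      hBone k (Finset.mem_of_mem_erase (Finset.mem_of_mem_erase (Finset.mem_sdiff.mp hk).1))
    have hPA : PA = (1 - X ^ (3 * 2)) * ((1 - X ^ 2) * PA'') := by
      rw [hPAdef, ← Finset.mul_prod_erase A (fun k => (1 - X ^ k : PowerSeries ℚ)) h3tA,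
        ← Finset.mul_prod_erase (A.erase (3 * 2)) (fun k => (1 - X ^ k : PowerSeries ℚ)) h2A]
    have hPB : PB = (1 - X ^ 1) * ((1 - X ^ 2) * ∏ k ∈ B'', (1 - X ^ k : PowerSeries ℚ)) := by
      rw [hPBdef, ← Finset.mul_prod_erase B (fun k => (1 - X ^ k : PowerSeries ℚ)) h1B,
        ← Finset.mul_prod_erase (B.erase 1) (fun k => (1 - X ^ k : PowerSeries ℚ)) h2B]
    have hPB'' : PC * PA'' = ∏ k ∈ B'', (1 - X ^ k : PowerSeries ℚ) := Finset.prod_sdiff hsub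
    have hGCPC : PC * GC = 1 := by
      rw [hPCdef, hGCdef, ← Finset.prod_mul_distrib,
        Finset.prod_congr rfl (fun k hk => one_sub_mul_geom (hCone k hk))]
      exact Finset.prod_const_one
    have hccPC : constantCoeff (R := ℚ) PC = 1 := cc_prod_one_sub hCone
    have hM0 : PB * (1 - X ^ (3 * 2)) * PC ≠ 0 :=
      ne_zero_of_cc_one
        (by rw [map_mul, map_mul, hccPB, cc_one_sub_pow (by omega), hccPC]; norm_num)
    have hZ : PA * PB⁻¹ * (X ^ (3 * 2 - 3) * (1 + X ^ 3) * (1 - X) * (1 - X ^ 2)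
          * (1 - X ^ (3 * 2))⁻¹)
        = (X ^ (3 * 2 - 3) + X ^ (3 * 2)) * ((1 - X ^ 2) * GC) := by
      apply mul_right_cancel₀ hM0
      calc PA * PB⁻¹ * (X ^ (3 * 2 - 3) * (1 + X ^ 3) * (1 - X) * (1 - X ^ 2)
              * (1 - X ^ (3 * 2))⁻¹) * (PB * (1 - X ^ (3 * 2)) * PC)
          = (PA * (X ^ (3 * 2 - 3) * (1 + X ^ 3)) * (1 - X) * (1 - X ^ 2) * PC)
              * ((PB⁻¹ * PB) * ((1 - X ^ (3 * 2))⁻¹ * (1 - X ^ (3 * 2)))) := by ring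
        _ = PA * (X ^ (3 * 2 - 3) * (1 + X ^ 3)) * (1 - X) * (1 - X ^ 2) * PC := by
            rw [hiPB, hi3t]; ring
        _ = (X ^ (3 * 2 - 3) + X ^ (3 * 2)) * ((1 - X ^ 2) * GC)
              * (PB * (1 - X ^ (3 * 2)) * PC) := by
            rw [hPA, hPB, ← hPB'', hpow, pow_one]
            linear_combination (-((X : PowerSeries ℚ) ^ (3 * 2 - 3) + X ^ (3 * 2)) * (1 - X ^ 2)
              * (1 - X) * (1 - X ^ 2) * PA'' * (1 - X ^ (3 * 2)) * PC) * hGCPC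
    rw [hZ]
    -- decompose C
    have hC : C = insert 6 (insert (2 * K + 2) (Od (2 * K + 1))) := by
      ext k
      have hkA : k ∈ A ↔ (k % 2 = 0 ∧ 2 ≤ k ∧ k ≤ 2 * K) := by
        rw [memA k]
        constructor
        · rintro ⟨i, hi, rfl⟩; omega
        · rintro ⟨h1, h2, h3⟩; exact ⟨(k - 2) / 2, by omega, by omega⟩
      constructor
      · intro hk
        obtain ⟨hkB, hkA''⟩ := Finset.mem_sdiff.mp hk
        obtain ⟨hne2, hkB1⟩ := Finset.mem_erase.mp hkB
        obtain ⟨hne1, hkB0⟩ := Finset.mem_erase.mp hkB1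
        obtain ⟨hk1, hkL⟩ := (memB k).mp hkB0
        rw [Finset.mem_insert, Finset.mem_insert, mem_Od]
        by_cases h6 : k = 6
        · exact Or.inl h6
        refine Or.inr ?_
        by_cases hke : k = 2 * K + 2
        · exact Or.inl hke
        refine Or.inr ?_
        have hodd : k % 2 = 1 := by
          by_contra hpar
          exact hkA'' (Finset.mem_erase.mpr ⟨hne2,
            Finset.mem_erase.mpr ⟨by omega, hkA.mpr (by omega)⟩⟩)
        exact ⟨by omega, by omega, hodd⟩
      · intro hk
        rcases Finset.mem_insert.mp hk with rfl | hk2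
        · refine Finset.mem_sdiff.mpr ⟨Finset.mem_erase.mpr ⟨by omega,
            Finset.mem_erase.mpr ⟨by omega, (memB 6).mpr ⟨by omega, by omega⟩⟩⟩, ?_⟩
          intro hmem
          exact (Finset.mem_erase.mp (Finset.mem_erase.mp hmem).2).1 rfl
        rcases Finset.mem_insert.mp hk2 with rfl | hk3
        · refine Finset.mem_sdiff.mpr ⟨Finset.mem_erase.mpr ⟨by omega,
            Finset.mem_erase.mpr ⟨by omega, (memB _).mpr ⟨by omega, by omega⟩⟩⟩, ?_⟩
          intro hmem
          have hA2 := hkA.mp (Finset.mem_erase.mp (Finset.mem_erase.mp hmem).2).2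
          omega
        · obtain ⟨h3, hle, hodd⟩ := mem_Od.mp hk3
          refine Finset.mem_sdiff.mpr ⟨Finset.mem_erase.mpr ⟨by omega,
            Finset.mem_erase.mpr ⟨by omega, (memB _).mpr ⟨by omega, by omega⟩⟩⟩, ?_⟩
          intro hmem
          have hA2 := hkA.mp (Finset.mem_erase.mp (Finset.mem_erase.mp hmem).2).2
          omega
    have h6ni : (6 : ℕ) ∉ insert (2 * K + 2) (Od (2 * K + 1)) := by
      simp only [Finset.mem_insert, mem_Od]
      omega
    have hKni : (2 * K + 2) ∉ Od (2 * K + 1) := by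
      simp only [mem_Od]
      omega
    have hGC2 : GC = geom 6 * (geom (2 * K + 2) * ∏ k ∈ Od (2 * K + 1), geom k) := by
      rw [hGCdef, hC, Finset.prod_insert h6ni, Finset.prod_insert hKni]
    have e2 : (X ^ (3 * 2 - 3) + X ^ (3 * 2)) * ((1 - X ^ 2) * GC)
        = ((geom 3 * X ^ 3) * ((1 - X ^ 2) * ∏ k ∈ Od (2 * K + 1), geom k))
            * geom (2 * K + 2) := by
      rw [show (3 * 2 - 3 : ℕ) = 3 by norm_num, show (3 * 2 : ℕ) = 6 by norm_num,
        hGC2, ← geom36]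
      ring
    rw [e2, Hi.coeff_mul (hi_geom (show n < 2 * K + 2 by omega))]
    set DD := (1 - X ^ 2) * ∏ k ∈ Od (2 * K + 1), geom k with hDDdef
    rw [PowerSeries.coeff_mul]
    have hh : ∀ a, (coeff (R := ℚ) a) (geom 3 * X ^ 3)
        = if 3 ≤ a then (if 3 ∣ a - 3 then (1 : ℚ) else 0) else 0 := by
      intro a
      rw [PowerSeries.coeff_mul_X_pow']
      by_cases h : 3 ≤ a
      · rw [if_pos h, if_pos h, geom, coeff_mk]
      · rw [if_neg h, if_neg h]
    have hh01 : ∀ a, 0 ≤ (coeff (R := ℚ) a) (geom 3 * X ^ 3) := by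
      intro a; rw [hh]; split_ifs <;> norm_num
    have hh1 : ∀ a, 3 ≤ a → (a - 3) % 3 = 0 → (coeff (R := ℚ) a) (geom 3 * X ^ 3) = 1 := by
      intro a h1 h2
      rw [hh, if_pos h1, if_pos (Nat.dvd_of_mod_eq_zero h2)]
    have hhz : ∀ a, ¬(3 ≤ a ∧ (a - 3) % 3 = 0) → (coeff (R := ℚ) a) (geom 3 * X ^ 3) = 0 := by
      intro a hcon
      rw [hh]
      by_cases h1 : 3 ≤ a
      · rw [if_pos h1, if_neg (fun hd => hcon ⟨h1, Nat.dvd_iff_mod_eq_zero.mp hd⟩)]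
      · rw [if_neg h1]
    have hDn : ∀ b, b ≤ n → b ≠ 2 → 0 ≤ (coeff (R := ℚ) b) DD := by
      intro b hb hb2
      rw [hDDdef]
      exact D_nonneg (by omega) hb2
    by_cases hbad : 5 ≤ n ∧ (n - 5) % 3 = 0
    · have hne : n ≠ 5 ∧ n ≠ 8 ∧ n ≠ 11 ∧ n ≠ 14 := by
        refine ⟨?_, ?_, ?_, ?_⟩ <;> (rintro rfl; apply htn; simp)
      have hn17 : 17 ≤ n := by omega
      have hm1 : (n - 2, 2) ∈ antidiagonal n := by
        rw [Finset.HasAntidiagonal.mem_antidiagonal]; omega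
      have hm2 : (n - 14, 14) ∈ (antidiagonal n).erase (n - 2, 2) := by
        refine Finset.mem_erase.mpr ⟨?_, by rw [Finset.HasAntidiagonal.mem_antidiagonal]; omega⟩
        intro hcontra
        have h14 := congrArg Prod.snd hcontra
        norm_num at h14
      have e3 : ∑ p ∈ antidiagonal n, (coeff (R := ℚ) p.1) (geom 3 * X ^ 3) * (coeff (R := ℚ) p.2) DD
          = (coeff (R := ℚ) (n - 2)) (geom 3 * X ^ 3) * (coeff (R := ℚ) 2) DD
            + ∑ p ∈ (antidiagonal n).erase (n - 2, 2),
                (coeff (R := ℚ) p.1) (geom 3 * X ^ 3) * (coeff (R := ℚ) p.2) DD :=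
        (Finset.add_sum_erase _
          (fun p => (coeff (R := ℚ) p.1) (geom 3 * X ^ 3) * (coeff (R := ℚ) p.2) DD) hm1).symm
      have e4 : ∑ p ∈ (antidiagonal n).erase (n - 2, 2),
            (coeff (R := ℚ) p.1) (geom 3 * X ^ 3) * (coeff (R := ℚ) p.2) DD
          = (coeff (R := ℚ) (n - 14)) (geom 3 * X ^ 3) * (coeff (R := ℚ) 14) DD
            + ∑ p ∈ ((antidiagonal n).erase (n - 2, 2)).erase (n - 14, 14),
                (coeff (R := ℚ) p.1) (geom 3 * X ^ 3) * (coeff (R := ℚ) p.2) DD :=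
        (Finset.add_sum_erase _
          (fun p => (coeff (R := ℚ) p.1) (geom 3 * X ^ 3) * (coeff (R := ℚ) p.2) DD) hm2).symm
      rw [e3, e4]
      have hterm1 : -1 ≤ (coeff (R := ℚ) (n - 2)) (geom 3 * X ^ 3) * (coeff (R := ℚ) 2) DD := by
        rw [hh1 (n - 2) (by omega) (by omega), one_mul, hDDdef]
        exact D_two
      have hterm2 : 1 ≤ (coeff (R := ℚ) (n - 14)) (geom 3 * X ^ 3) * (coeff (R := ℚ) 14) DD := by
        rw [hh1 (n - 14) (by omega) (by omega), one_mul, hDDdef]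
        exact D_fourteen (by omega)
      have hrest : 0 ≤ ∑ p ∈ ((antidiagonal n).erase (n - 2, 2)).erase (n - 14, 14),
          (coeff (R := ℚ) p.1) (geom 3 * X ^ 3) * (coeff (R := ℚ) p.2) DD := by
        apply Finset.sum_nonneg
        rintro ⟨a, b⟩ hp
        have hp1 := Finset.mem_erase.mp hp
        have hp2 := Finset.mem_erase.mp hp1.2
        have hab := Finset.HasAntidiagonal.mem_antidiagonal.mp hp2.2
        have hb2 : b ≠ 2 := by
          intro hb
          apply hp2.1
          have ha : a = n - 2 := by omega
          rw [ha, hb]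
        exact mul_nonneg (hh01 a) (hDn b (by omega) hb2)
      linarith
    · apply Finset.sum_nonneg
      rintro ⟨a, b⟩ hp
      have hab := Finset.HasAntidiagonal.mem_antidiagonal.mp hp
      by_cases hb2 : b = 2
      · rw [hhz a (by omega), zero_mul]
      · exact mul_nonneg (hh01 a) (hDn b (by omega) hb2)
  · -- t ≥ 3
    set A' := A.erase (3 * t) with hA'def
    set B'' := (B.erase 1).erase 2 with hB''def
    have htk : t * (K - 1) + t = t * K := by
      have h1 : K - 1 + 1 = K := by omega
      calc t * (K - 1) + t = t * (K - 1 + 1) := by ring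
        _ = t * K := by rw [h1]
    have hsub : A' ⊆ B'' := by
      intro k hk
      obtain ⟨hne, hkA⟩ := Finset.mem_erase.mp hk
      obtain ⟨i, hi, rfl⟩ := (memA _).mp hkA
      have hti : t * i ≤ t * (K - 1) := Nat.mul_le_mul_left t (by omega)
      refine Finset.mem_erase.mpr ⟨by omega,
        Finset.mem_erase.mpr ⟨by omega, (memB _).mpr ⟨by omega, by omega⟩⟩⟩
    set C := B'' \ A' with hCdef
    set PA' := ∏ k ∈ A', (1 - X ^ k : PowerSeries ℚ) with hPA'def
    set PC := ∏ k ∈ C, (1 - X ^ k : PowerSeries ℚ) with hPCdef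
    set GC := ∏ k ∈ C, geom k with hGCdef
    have hCone : ∀ k ∈ C, 1 ≤ k := fun k hk =>
      hBone k (Finset.mem_of_mem_erase (Finset.mem_of_mem_erase (Finset.mem_sdiff.mp hk).1))
    have hPA : PA = (1 - X ^ (3 * t)) * PA' := (Finset.mul_prod_erase A _ h3tA).symm
    have hPB : PB = (1 - X ^ 1) * ((1 - X ^ 2) * ∏ k ∈ B'', (1 - X ^ k : PowerSeries ℚ)) := by
      rw [hPBdef, ← Finset.mul_prod_erase B (fun k => (1 - X ^ k : PowerSeries ℚ)) h1B,
        ← Finset.mul_prod_erase (B.erase 1) (fun k => (1 - X ^ k : PowerSeries ℚ)) h2B]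
    have hPB'' : PC * PA' = ∏ k ∈ B'', (1 - X ^ k : PowerSeries ℚ) := Finset.prod_sdiff hsub
    have hGCPC : PC * GC = 1 := by
      rw [hPCdef, hGCdef, ← Finset.prod_mul_distrib,
        Finset.prod_congr rfl (fun k hk => one_sub_mul_geom (hCone k hk))]
      exact Finset.prod_const_one
    have hccPC : constantCoeff (R := ℚ) PC = 1 := cc_prod_one_sub hCone
    have hM0 : PB * (1 - X ^ (3 * t)) * PC ≠ 0 :=
      ne_zero_of_cc_one
        (by rw [map_mul, map_mul, hccPB, cc_one_sub_pow (by omega), hccPC]; norm_num)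
    have hZ : PA * PB⁻¹ * (X ^ (3 * t - 3) * (1 + X ^ 3) * (1 - X) * (1 - X ^ 2)
          * (1 - X ^ (3 * t))⁻¹)
        = (X ^ (3 * t - 3) + X ^ (3 * t)) * GC := by
      apply mul_right_cancel₀ hM0
      calc PA * PB⁻¹ * (X ^ (3 * t - 3) * (1 + X ^ 3) * (1 - X) * (1 - X ^ 2)
              * (1 - X ^ (3 * t))⁻¹) * (PB * (1 - X ^ (3 * t)) * PC)
          = (PA * (X ^ (3 * t - 3) * (1 + X ^ 3)) * (1 - X) * (1 - X ^ 2) * PC)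
              * ((PB⁻¹ * PB) * ((1 - X ^ (3 * t))⁻¹ * (1 - X ^ (3 * t)))) := by ring
        _ = PA * (X ^ (3 * t - 3) * (1 + X ^ 3)) * (1 - X) * (1 - X ^ 2) * PC := by
            rw [hiPB, hi3t]; ring
        _ = (X ^ (3 * t - 3) + X ^ (3 * t)) * GC * (PB * (1 - X ^ (3 * t)) * PC) := by
            rw [hPA, hPB, ← hPB'', hpow, pow_one]
            linear_combination (-((X : PowerSeries ℚ) ^ (3 * t - 3) + X ^ (3 * t)) * (1 - X)
              * (1 - X ^ 2) * PA' * (1 - X ^ (3 * t)) * PC) * hGCPC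
    rw [hZ]
    refine NN.mul ?_ (nn_prod fun k _ => nn_geom k) n
    intro j
    rw [map_add, PowerSeries.coeff_X_pow, PowerSeries.coeff_X_pow]
    split_ifs <;> norm_num
end
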